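/- arXiv:1902.05707 — 6 statements merged into one kernel-verified Lean document; each statement's English description precedes it below -/
import Mathlib

section
/- Let σ : ℝ → ℝ, τ ∈ ℝ, r > 0 and M > 0 be such that σ is three times differentiable on [τ−r, τ+r], σ''(τ) > 0, |σ'''(x)| ≤ M for all x ∈ [τ−r, τ+r], and the symmetric function x ↦ σ(x+τ) + σ(−x+τ) is monotonically increasing for x ≥ 0. Define h(x,a) = (a²/σ''(τ))·(σ(x/a + τ) + σ(−x/a + τ) − 2σ(τ)). Given R > 0 and ν > 0, if a satisfies a ≥ 2R/r, a ≥ 8MR³/(3ν·σ''(τ)), and a ≥ 4MR/(3σ''(τ)), then: (i) h(x,a) ≥ 0 for all x; (ii) |h(x,a) − x²| < ν for all |x| ≤ 2R; and (iii) h(x,a) ≥ 4R² − ν for all |x| > 2R. -/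
open Set

open Set

lemma pos_aux (r : ℝ) (hr : 0 < r) (G G' G'' : ℝ → ℝ) (c : ℝ)
    (hG : ∀ t ∈ Set.Icc (0:ℝ) r, HasDerivAt G (G' t) t)
    (hG' : ∀ t ∈ Set.Icc (0:ℝ) r, HasDerivAt G' (G'' t) t)
    (hG'' : HasDerivAt G'' c 0) (hc : 0 < c)
    (h0 : G 0 = 0) (h0' : G' 0 = 0) (h0'' : G'' 0 = 0)
    (hnn : ∀ t ∈ Set.Icc (0:ℝ) r, 0 ≤ G'' t) :
    ∀ y, 0 < y → y ≤ r → 0 < G y := by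
  intro y hy0 hyr
  have h0mem : (0:ℝ) ∈ Icc (0:ℝ) r := ⟨le_refl _, hr.le⟩
  -- eventually G'' > 0 on the right of 0
  have hslope : Filter.Tendsto (slope G'' 0) (nhdsWithin 0 {(0:ℝ)}ᶜ) (nhds c) :=
    hasDerivAt_iff_tendsto_slope.mp hG''
  have hev : ∀ᶠ t in nhdsWithin 0 (Ioi (0:ℝ)), 0 < G'' t := by
    have h1 : ∀ᶠ t in nhdsWithin 0 {(0:ℝ)}ᶜ, c/2 < slope G'' 0 t :=
      hslope.eventually (eventually_gt_nhds (by linarith))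
    have h2 : ∀ᶠ t in nhdsWithin 0 (Ioi (0:ℝ)), c/2 < slope G'' 0 t :=
      h1.filter_mono (nhdsWithin_mono 0 (fun t ht => ne_of_gt ht))
    filter_upwards [h2, self_mem_nhdsWithin] with t h1 h2
    have ht : (0:ℝ) < t := h2
    rw [slope_def_field, h0''] at h1
    have : 0 < (G'' t - 0) / (t - 0) := lt_trans (by linarith) h1
    have := mul_pos this (show 0 < t - 0 by linarith)
    rw [div_mul_cancel₀] at this
    · linarith
    · linarith
  obtain ⟨δ, hδpos, hδ⟩ : ∃ δ > 0, ∀ t, 0 < t → t < δ → 0 < G'' t := by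
    rw [eventually_nhdsWithin_iff, Metric.eventually_nhds_iff] at hev
    obtain ⟨δ, hδ, H⟩ := hev
    exact ⟨δ, hδ, fun t ht1 ht2 => H (by simpa [abs_of_pos ht1] using ht2) ht1⟩
  -- monotonicity of G' and G on [0, r]
  have contG' : ContinuousOn G' (Icc 0 r) := fun t ht =>
    (hG' t ht).continuousAt.continuousWithinAt
  have contG : ContinuousOn G (Icc 0 r) := fun t ht =>
    (hG t ht).continuousAt.continuousWithinAt
  have diffG' : DifferentiableOn ℝ G' (interior (Icc (0:ℝ) r)) := by
    rw [interior_Icc]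
    exact fun t ht => (hG' t ⟨ht.1.le, ht.2.le⟩).differentiableAt.differentiableWithinAt
  have diffG : DifferentiableOn ℝ G (interior (Icc (0:ℝ) r)) := by
    rw [interior_Icc]
    exact fun t ht => (hG t ⟨ht.1.le, ht.2.le⟩).differentiableAt.differentiableWithinAt
  have monoG' : MonotoneOn G' (Icc 0 r) := by
    apply monotoneOn_of_deriv_nonneg (convex_Icc 0 r) contG' diffG'
    intro t ht
    rw [interior_Icc] at ht
    rw [(hG' t ⟨ht.1.le, ht.2.le⟩).deriv]
    exact hnn t ⟨ht.1.le, ht.2.le⟩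
  have hG'nn : ∀ t ∈ Icc (0:ℝ) r, 0 ≤ G' t := by
    intro t ht
    have := monoG' h0mem ht ht.1
    linarith [h0'] 
  have monoG : MonotoneOn G (Icc 0 r) := by
    apply monotoneOn_of_deriv_nonneg (convex_Icc 0 r) contG diffG
    intro t ht
    rw [interior_Icc] at ht
    rw [(hG t ⟨ht.1.le, ht.2.le⟩).deriv]
    exact hG'nn t ⟨ht.1.le, ht.2.le⟩
  -- d := min (δ/2) y
  set d := min (δ/2) y with hd
  have hd0 : 0 < d := lt_min (by linarith) hy0
  have hdy : d ≤ y := min_le_right _ _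
  have hdr : d ≤ r := hdy.trans hyr
  have hdδ : d < δ := lt_of_le_of_lt (min_le_left _ _) (by linarith)
  -- G' > 0 on (0, d)
  have key1 : ∀ x, 0 < x → x < d → 0 < G' x := by
    intro x hx0 hxd
    have hxr : x ≤ r := by linarith
    have smono : StrictMonoOn G' (Icc 0 x) := by
      apply strictMonoOn_of_deriv_pos (convex_Icc 0 x)
      · exact contG'.mono (Icc_subset_Icc (le_refl _) hxr)
      · intro t ht
        rw [interior_Icc] at ht
        rw [(hG' t ⟨ht.1.le, by linarith [ht.2]⟩).deriv]
        exact hδ t ht.1 (by linarith [ht.2])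
    have := smono ⟨le_refl _, hx0.le⟩ ⟨hx0.le, le_refl _⟩ hx0
    linarith [h0']
  -- G strictly increasing on [0, d]
  have smonoG : StrictMonoOn G (Icc 0 d) := by
    apply strictMonoOn_of_deriv_pos (convex_Icc 0 d)
    · exact contG.mono (Icc_subset_Icc (le_refl _) hdr)
    · intro t ht
      rw [interior_Icc] at ht
      rw [(hG t ⟨ht.1.le, by linarith [ht.2]⟩).deriv]
      exact key1 t ht.1 ht.2
  have hGd : 0 < G d := by
    have := smonoG ⟨le_refl _, hd0.le⟩ ⟨hd0.le, le_refl _⟩ hd0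
    linarith [h0]
  have := monoG ⟨hd0.le, hdr⟩ ⟨hy0.le, hyr⟩ hdy
  linarith



lemma taylor_aux (F F1 F2 F3 : ℝ → ℝ) (r M K : ℝ) (hr : 0 < r) (hM : 0 < M)
    (hd1 : ∀ t ∈ Set.Icc (0:ℝ) r, HasDerivAt F (F1 t) t)
    (hd2 : ∀ t ∈ Set.Icc (0:ℝ) r, HasDerivAt F1 (F2 t) t)
    (hd3 : ∀ t ∈ Set.Icc (0:ℝ) r, HasDerivAt F2 (F3 t) t)
    (hb : ∀ t ∈ Set.Icc (0:ℝ) r, |F3 t| ≤ 2*M)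
    (h30 : F3 0 = 0) (h10 : F1 0 = 0) (h20 : F2 0 = 2*K) :
    ∀ y, 0 < y → y ≤ r → |F y - F 0 - K*y^2| < M*y^3/3 := by
  have h0mem : (0:ℝ) ∈ Icc (0:ℝ) r := ⟨le_refl _, hr.le⟩
  have main : ∀ s : ℝ, s = 1 ∨ s = -1 → ∀ y, 0 < y → y ≤ r →
      0 < M*y^3/3 - s*(F y - F 0 - K*y^2) := by
    intro s hs
    apply pos_aux r hr
      (fun t => M*t^3/3 - s*(F t - F 0 - K*t^2))
      (fun t => M*t^2 - s*(F1 t - 2*K*t))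
      (fun t => 2*M*t - s*(F2 t - 2*K))
      (2*M)
    · -- first derivative
      intro t ht
      have hcube : HasDerivAt (fun t : ℝ => M*t^3/3) (M*t^2) t := by
        have := ((hasDerivAt_pow 3 t).const_mul M).div_const 3
        refine this.congr_deriv ?_
        push_cast; ring
      have hrest : HasDerivAt (fun t : ℝ => s*(F t - F 0 - K*t^2))
          (s*(F1 t - 2*K*t)) t := by
        have h2 : HasDerivAt (fun t : ℝ => K*t^2) (2*K*t) t := by
          have := (hasDerivAt_pow 2 t).const_mul K
          refine this.congr_deriv ?_
          push_cast; ring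
        exact (((hd1 t ht).sub_const (F 0)).sub h2).const_mul s
      exact hcube.sub hrest
    · -- second derivative
      intro t ht
      have hsq : HasDerivAt (fun t : ℝ => M*t^2) (2*M*t) t := by
        have := (hasDerivAt_pow 2 t).const_mul M
        refine this.congr_deriv ?_
        push_cast; ring
      have hlin : HasDerivAt (fun t : ℝ => 2*K*t) (2*K) t := by
        simpa using (hasDerivAt_id t).const_mul (2*K)
      exact hsq.sub (((hd2 t ht).sub hlin).const_mul s)
    · -- third derivative at 0
      have hlin : HasDerivAt (fun t : ℝ => 2*M*t) (2*M) (0:ℝ) := by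
        simpa using (hasDerivAt_id (0:ℝ)).const_mul (2*M)
      have := hlin.sub (((hd3 0 h0mem).sub_const (2*K)).const_mul s)
      refine this.congr_deriv ?_
      rw [h30]; ring
    · linarith
    · norm_num
    · rw [h10]; ring
    · rw [h20]; ring
    · -- G'' nonneg
      intro t ht
      rcases eq_or_lt_of_le ht.1 with h | h
      · rw [← h, h20]; ring_nf; exact le_refl _
      · obtain ⟨ξ, hξ, hsl⟩ := exists_hasDerivAt_eq_slope F2 F3 h
          (fun u hu => (hd3 u ⟨hu.1, hu.2.trans ht.2⟩).continuousAt.continuousWithinAt)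
          (fun u hu => hd3 u ⟨hu.1.le, hu.2.le.trans ht.2⟩)
        have hξmem : ξ ∈ Icc (0:ℝ) r := ⟨hξ.1.le, hξ.2.le.trans ht.2⟩
        have hF3 : |F3 ξ| ≤ 2*M := hb ξ hξmem
        have heq : F2 t - 2*K = F3 ξ * t := by
          rw [hsl, ← h20]
          field_simp
          ring
        have habs : |F2 t - 2*K| ≤ 2*M*t := by
          rw [heq, abs_mul, abs_of_pos h]
          exact mul_le_mul_of_nonneg_right hF3 h.le
        have hs' : s*(F2 t - 2*K) ≤ |F2 t - 2*K| := by
          rcases hs with h' | h' <;> subst h'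
          · rw [one_mul]; exact le_abs_self _
          · rw [neg_one_mul]; exact neg_le_abs _
        linarith
  intro y hy0 hyr
  have hp := main 1 (Or.inl rfl) y hy0 hyr
  have hm := main (-1) (Or.inr rfl) y hy0 hyr
  rw [abs_lt]
  constructor <;> nlinarith


/-- Lemma 5 (first-layer supernode): the two-node supernode
`h(x,a) = (a²/σ''(τ))·(σ(x/a+τ) + σ(−x/a+τ) − 2σ(τ))` built from an activation `σ`
with positive curvature at `τ`, bounded third derivative near `τ`, and symmetric-sum
monotonicity, approximates `x²` with accuracy `ν` on `|x| ≤ 2R`, is non-negative, and is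
at least `4R² − ν` for `|x| > 2R`, provided `a` is large enough. -/
theorem stmt3 (σ σ' σ'' σ''' : ℝ → ℝ) (τ r M : ℝ) (hr : 0 < r) (hM : 0 < M)
    (hder1 : ∀ x ∈ Set.Icc (τ - r) (τ + r), HasDerivAt σ (σ' x) x)
    (hder2 : ∀ x ∈ Set.Icc (τ - r) (τ + r), HasDerivAt σ' (σ'' x) x)
    (hder3 : ∀ x ∈ Set.Icc (τ - r) (τ + r), HasDerivAt σ'' (σ''' x) x)
    (hcurv : 0 < σ'' τ)
    (hbd3 : ∀ x ∈ Set.Icc (τ - r) (τ + r), |σ''' x| ≤ M)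
    (hmono : ∀ x y : ℝ, 0 ≤ x → x ≤ y →
      σ (x + τ) + σ (-x + τ) ≤ σ (y + τ) + σ (-y + τ))
    (h : ℝ → ℝ → ℝ)
    (hh : ∀ x b : ℝ, h x b = b ^ 2 / σ'' τ * (σ (x / b + τ) + σ (-x / b + τ) - 2 * σ τ))
    (R ν a : ℝ) (hR : 0 < R) (hν : 0 < ν)
    (ha1 : a ≥ 2 * R / r)
    (ha2 : a ≥ 8 * M * R ^ 3 / (3 * ν * σ'' τ))
    (ha3 : a ≥ 4 * M * R / (3 * σ'' τ)) :
    (∀ x : ℝ, 0 ≤ h x a) ∧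
    (∀ x : ℝ, |x| ≤ 2 * R → |h x a - x ^ 2| < ν) ∧
    (∀ x : ℝ, |x| > 2 * R → h x a ≥ 4 * R ^ 2 - ν) := by
  have ha0 : 0 < a := lt_of_lt_of_le (div_pos (by linarith) hr) ha1
  have hra' : 2 * R ≤ a * r := by
    have := (div_le_iff₀ hr).mp ha1
    linarith [mul_comm r a]
  have hra : 2 * R / a ≤ r := (div_le_iff₀ ha0).mpr (by linarith [mul_comm a r, mul_comm r a])
  have Feven : ∀ u : ℝ, σ (u + τ) + σ (-u + τ) = σ (|u| + τ) + σ (-|u| + τ) := by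
    intro u
    rcases abs_cases u with ⟨h1, _⟩ | ⟨h1, _⟩ <;> rw [h1]
    rw [neg_neg]; ring
  have mem1 : ∀ t : ℝ, t ∈ Icc (0:ℝ) r → t + τ ∈ Icc (τ - r) (τ + r) :=
    fun t ht => ⟨by linarith [ht.1], by linarith [ht.2]⟩
  have mem2 : ∀ t : ℝ, t ∈ Icc (0:ℝ) r → -t + τ ∈ Icc (τ - r) (τ + r) :=
    fun t ht => ⟨by linarith [ht.2], by linarith [ht.1]⟩
  have dplus : ∀ (g g' : ℝ → ℝ), (∀ x ∈ Icc (τ - r) (τ + r), HasDerivAt g (g' x) x) →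
      ∀ t ∈ Icc (0:ℝ) r, HasDerivAt (fun y : ℝ => g (y + τ)) (g' (t + τ)) t := by
    intro g g' hg t ht
    have h2 : HasDerivAt (fun y : ℝ => y + τ) (1 : ℝ) t := (hasDerivAt_id t).add_const τ
    have := (hg (t + τ) (mem1 t ht)).comp t h2
    exact this.congr_deriv (mul_one _)
  have dminus : ∀ (g g' : ℝ → ℝ), (∀ x ∈ Icc (τ - r) (τ + r), HasDerivAt g (g' x) x) →
      ∀ t ∈ Icc (0:ℝ) r, HasDerivAt (fun y : ℝ => g (-y + τ)) (-(g' (-t + τ))) t := by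
    intro g g' hg t ht
    have h2 : HasDerivAt (fun y : ℝ => -y + τ) (-1 : ℝ) t := by
      simpa using ((hasDerivAt_id t).neg.add_const τ)
    have := (hg (-t + τ) (mem2 t ht)).comp t h2
    refine this.congr_deriv ?_
    ring
  have hd1' : ∀ t ∈ Icc (0:ℝ) r, HasDerivAt (fun y : ℝ => σ (y + τ) + σ (-y + τ))
      (σ' (t + τ) - σ' (-t + τ)) t := by
    intro t ht
    have := (dplus σ σ' hder1 t ht).add (dminus σ σ' hder1 t ht)
    exact this.congr_deriv (sub_eq_add_neg _ _).symm
  have hd2' : ∀ t ∈ Icc (0:ℝ) r, HasDerivAt (fun y : ℝ => σ' (y + τ) - σ' (-y + τ))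
      (σ'' (t + τ) + σ'' (-t + τ)) t := by
    intro t ht
    have := (dplus σ' σ'' hder2 t ht).sub (dminus σ' σ'' hder2 t ht)
    refine this.congr_deriv ?_
    ring
  have hd3' : ∀ t ∈ Icc (0:ℝ) r, HasDerivAt (fun y : ℝ => σ'' (y + τ) + σ'' (-y + τ))
      (σ''' (t + τ) - σ''' (-t + τ)) t := by
    intro t ht
    have := (dplus σ'' σ''' hder3 t ht).add (dminus σ'' σ''' hder3 t ht)
    exact this.congr_deriv (sub_eq_add_neg _ _).symm
  have hb' : ∀ t ∈ Icc (0:ℝ) r, |σ''' (t + τ) - σ''' (-t + τ)| ≤ 2 * M := by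
    intro t ht
    rw [sub_eq_add_neg]
    refine (abs_add_le _ _).trans ?_
    rw [abs_neg]
    linarith [hbd3 (t + τ) (mem1 t ht), hbd3 (-t + τ) (mem2 t ht)]
  have h30' : σ''' (0 + τ) - σ''' (-0 + τ) = 0 := by norm_num
  have h10' : σ' (0 + τ) - σ' (-0 + τ) = 0 := by norm_num
  have h20' : σ'' (0 + τ) + σ'' (-0 + τ) = 2 * σ'' τ := by
    simp only [zero_add, neg_zero]; ring
  have key := taylor_aux (fun y : ℝ => σ (y + τ) + σ (-y + τ))
    (fun y : ℝ => σ' (y + τ) - σ' (-y + τ))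
    (fun y : ℝ => σ'' (y + τ) + σ'' (-y + τ))
    (fun y : ℝ => σ''' (y + τ) - σ''' (-y + τ))
    r M (σ'' τ) hr hM hd1' hd2' hd3' hb' h30' h10' h20'
  -- part (ii)
  have part2 : ∀ x : ℝ, |x| ≤ 2 * R → |h x a - x ^ 2| < ν := by
    intro x hx
    rw [hh]
    by_cases hx0 : x = 0
    · subst hx0
      simp only [neg_zero, zero_div, zero_add]
      have e : σ τ + σ τ - 2 * σ τ = 0 := by ring
      rw [e]
      simpa using hν
    · set y := |x| / a with hy
      have hy0 : 0 < y := div_pos (abs_pos.mpr hx0) ha0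
      have hyr : y ≤ r := by
        have h1 : |x| / a ≤ 2 * R / a := by gcongr
        rw [hy]; linarith
      have hk := key y hy0 hyr
      simp only [zero_add, neg_zero] at hk
      have hxy : σ (x / a + τ) + σ (-x / a + τ) = σ (y + τ) + σ (-y + τ) := by
        rw [neg_div, Feven (x / a), abs_div, abs_of_pos ha0, ← hy]
      rw [hxy]
      have hx2 : x ^ 2 = a ^ 2 * y ^ 2 := by
        rw [hy, div_pow, sq_abs]; field_simp
      have heq : a ^ 2 / σ'' τ * (σ (y + τ) + σ (-y + τ) - 2 * σ τ) - x ^ 2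
          = a ^ 2 / σ'' τ * (σ (y + τ) + σ (-y + τ) - (σ τ + σ τ) - σ'' τ * y ^ 2) := by
        rw [hx2]; field_simp; ring
      rw [heq, abs_mul, abs_of_pos (show (0:ℝ) < a ^ 2 / σ'' τ by positivity)]
      have hlt : a ^ 2 / σ'' τ * |σ (y + τ) + σ (-y + τ) - (σ τ + σ τ) - σ'' τ * y ^ 2|
          < a ^ 2 / σ'' τ * (M * y ^ 3 / 3) :=
        mul_lt_mul_of_pos_left hk (by positivity)
      have hfin : a ^ 2 / σ'' τ * (M * y ^ 3 / 3) ≤ ν := by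
        rw [hy]
        have hX : |x| ^ 3 ≤ 8 * R ^ 3 := by
          nlinarith [pow_le_pow_left₀ (abs_nonneg x) hx 3]
        have h2 : 8 * M * R ^ 3 ≤ a * (3 * ν * σ'' τ) := by
          have := (div_le_iff₀ (by positivity : (0:ℝ) < 3 * ν * σ'' τ)).mp ha2
          linarith
        rw [div_pow, show a ^ 2 / σ'' τ * (M * (|x| ^ 3 / a ^ 3) / 3)
            = M * |x| ^ 3 / (3 * a * σ'' τ) from by field_simp,
          div_le_iff₀ (by positivity : (0:ℝ) < 3 * a * σ'' τ)]
        nlinarith [mul_le_mul_of_nonneg_left hX hM.le]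
      linarith
  refine ⟨?_, part2, ?_⟩
  · -- part (i)
    intro x
    rw [hh]
    apply mul_nonneg (by positivity)
    rw [neg_div, Feven (x / a)]
    have := hmono 0 (|x / a|) (le_refl 0) (abs_nonneg (x / a))
    simp only [zero_add, neg_zero] at this
    linarith
  · -- part (iii)
    intro x hx
    have h2R := part2 (2 * R) (le_of_eq (abs_of_pos (by linarith : (0:ℝ) < 2 * R)))
    have hmono' : h (2 * R) a ≤ h x a := by
      rw [hh, hh]
      apply mul_le_mul_of_nonneg_left ?_ (by positivity : (0:ℝ) ≤ a ^ 2 / σ'' τ)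
      rw [show -(2 * R) / a = -(2 * R / a) from neg_div a (2 * R), neg_div,
        Feven (x / a)]
      have hle : 2 * R / a ≤ |x / a| := by
        rw [abs_div, abs_of_pos ha0]
        gcongr
      have := hmono (2 * R / a) (|x / a|) (by positivity) hle
      linarith
    have habs := abs_lt.mp h2R
    have e : (2 * R) ^ 2 = 4 * R ^ 2 := by ring
    rw [e] at habs
    linarith [habs.1]
end

section
/- Let σ, τ, r, M, h(x,a), R > 0 and ν > 0 be as follows: σ is three times differentiable on [τ−r, τ+r] with σ''(τ) > 0 and |σ'''| ≤ M there, x ↦ σ(x+τ) + σ(−x+τ) is monotonically increasing for x ≥ 0, h(x,a) = (a²/σ''(τ))·(σ(x/a+τ) + σ(−x/a+τ) − 2σ(τ)), and a ≥ max(2R/r, 8MR³/(3ν·σ''(τ)), 4MR/(3σ''(τ))). Define ĝ(x) = Σ_{i=1}^n h(x_i, a) for x ∈ ℝⁿ, and g(x) = Σ_{i=1}^n x_i². Then: (i) ĝ(x) ≥ 0 for all x; (ii) |ĝ(x) − g(x)| ≤ n·ν whenever g(x) ≤ 4R²; and (iii) ĝ(x) ≥ 4R² − n·ν whenever g(x)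 > 4R². -/
lemma aux_cube {E E1 E2 E3 : ℝ → ℝ} {r K : ℝ}
    (hd1 : ∀ s ∈ Set.Icc (0:ℝ) r, HasDerivAt E (E1 s) s)
    (hd2 : ∀ s ∈ Set.Icc (0:ℝ) r, HasDerivAt E1 (E2 s) s)
    (hd3 : ∀ s ∈ Set.Icc (0:ℝ) r, HasDerivAt E2 (E3 s) s)
    (h0 : E 0 = 0) (h0' : E1 0 = 0) (h0'' : E2 0 = 0)
    (hb : ∀ s ∈ Set.Icc (0:ℝ) r, |E3 s| ≤ K) :
    ∀ s ∈ Set.Icc (0:ℝ) r, |E s| ≤ K * s ^ 3 / 6 := by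
  have step2 : ∀ s ∈ Set.Icc (0:ℝ) r, |E2 s| ≤ K * s := by
    intro s hs
    have := image_norm_le_of_norm_deriv_right_le_deriv_boundary
      (f := E2) (f' := E3) (a := 0) (b := r)
      (fun t ht => ((hd3 t ht).continuousAt).continuousWithinAt)
      (fun t ht => (hd3 t (Set.Ico_subset_Icc_self ht)).hasDerivWithinAt)
      (B := fun t => K * t) (B' := fun _ => K)
      (by simp [h0''])
      (fun t => by simpa using (hasDerivAt_id t).const_mul K)
      (fun t ht => by simpa [Real.norm_eq_abs] using hb t (Set.Ico_subset_Icc_self ht)) hs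
    simpa [Real.norm_eq_abs] using this
  have step1 : ∀ s ∈ Set.Icc (0:ℝ) r, |E1 s| ≤ K * s ^ 2 / 2 := by
    intro s hs
    have := image_norm_le_of_norm_deriv_right_le_deriv_boundary
      (f := E1) (f' := E2) (a := 0) (b := r)
      (fun t ht => ((hd2 t ht).continuousAt).continuousWithinAt)
      (fun t ht => (hd2 t (Set.Ico_subset_Icc_self ht)).hasDerivWithinAt)
      (B := fun t => K * t ^ 2 / 2) (B' := fun t => K * t)
      (by simp [h0'])
      (fun t => by
        have := ((hasDerivAt_pow 2 t).const_mul K).div_const 2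
        convert this using 1
        rfl; rfl; simp; ring)
      (fun t ht => by simpa [Real.norm_eq_abs] using step2 t (Set.Ico_subset_Icc_self ht)) hs
    simpa [Real.norm_eq_abs] using this
  intro s hs
  have := image_norm_le_of_norm_deriv_right_le_deriv_boundary
    (f := E) (f' := E1) (a := 0) (b := r)
    (fun t ht => ((hd1 t ht).continuousAt).continuousWithinAt)
    (fun t ht => (hd1 t (Set.Ico_subset_Icc_self ht)).hasDerivWithinAt)
    (B := fun t => K * t ^ 3 / 6) (B' := fun t => K * t ^ 2 / 2)
    (by simp [h0])
    (fun t => by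
      have := ((hasDerivAt_pow 3 t).const_mul K).div_const 6
      convert this using 1
      rfl; rfl; simp; ring)
    (fun t ht => by simpa [Real.norm_eq_abs] using step1 t (Set.Ico_subset_Icc_self ht)) hs
  simpa [Real.norm_eq_abs] using this

lemma aux_taylor (σ σ' σ'' σ''' : ℝ → ℝ) (τ r M : ℝ) (hr : 0 < r)
    (hder1 : ∀ x ∈ Set.Icc (τ - r) (τ + r), HasDerivAt σ (σ' x) x)
    (hder2 : ∀ x ∈ Set.Icc (τ - r) (τ + r), HasDerivAt σ' (σ'' x) x)
    (hder3 : ∀ x ∈ Set.Icc (τ - r) (τ + r), HasDerivAt σ'' (σ''' x) x)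
    (hbd3 : ∀ x ∈ Set.Icc (τ - r) (τ + r), |σ''' x| ≤ M) :
    ∀ s ∈ Set.Icc (0:ℝ) r,
      |σ (s + τ) + σ (-s + τ) - 2 * σ τ - σ'' τ * s ^ 2| ≤ M * s ^ 3 / 3 := by
  have hmemp : ∀ s ∈ Set.Icc (0:ℝ) r, s + τ ∈ Set.Icc (τ - r) (τ + r) := by
    intro s hs; obtain ⟨h1, h2⟩ := hs; constructor <;> linarith
  have hmemm : ∀ s ∈ Set.Icc (0:ℝ) r, -s + τ ∈ Set.Icc (τ - r) (τ + r) := by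
    intro s hs; obtain ⟨h1, h2⟩ := hs; constructor <;> linarith
  have hτ : (τ:ℝ) ∈ Set.Icc (τ - r) (τ + r) := by constructor <;> linarith
  have inm : ∀ s : ℝ, HasDerivAt (fun t : ℝ => -t + τ) (-1) s := fun s =>
    ((hasDerivAt_id s).neg.add_const τ)
  have inp : ∀ s : ℝ, HasDerivAt (fun t : ℝ => t + τ) 1 s := fun s =>
    ((hasDerivAt_id s).add_const τ)
  have key := aux_cube
    (E := fun s => σ (s + τ) + σ (-s + τ) - 2 * σ τ - σ'' τ * s ^ 2)
    (E1 := fun s => σ' (s + τ) - σ' (-s + τ) - 2 * σ'' τ * s)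
    (E2 := fun s => σ'' (s + τ) + σ'' (-s + τ) - 2 * σ'' τ)
    (E3 := fun s => σ''' (s + τ) - σ''' (-s + τ)) (r := r) (K := 2 * M)
    (fun s hs => by
      have h1 := (hder1 _ (hmemp s hs)).comp s (inp s)
      have h2 := (hder1 _ (hmemm s hs)).comp s (inm s)
      have h3 := ((h1.add h2).sub_const (2 * σ τ)).sub ((hasDerivAt_pow 2 s).const_mul (σ'' τ))
      have heq : σ' (s + τ) * 1 + σ' (-s + τ) * -1 - σ'' τ * (((2:ℕ):ℝ) * s ^ (2 - 1)) =
          σ' (s + τ) - σ' (-s + τ) - 2 * σ'' τ * s := by push_cast; ring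
      rw [heq] at h3
      exact h3)
    (fun s hs => by
      have h1 := (hder2 _ (hmemp s hs)).comp s (inp s)
      have h2 := (hder2 _ (hmemm s hs)).comp s (inm s)
      have h3 := (h1.sub h2).sub ((hasDerivAt_id s).const_mul (2 * σ'' τ))
      have heq : σ'' (s + τ) * 1 - σ'' (-s + τ) * -1 - 2 * σ'' τ * 1 =
          σ'' (s + τ) + σ'' (-s + τ) - 2 * σ'' τ := by ring
      rw [heq] at h3
      exact h3)
    (fun s hs => by
      have h1 := (hder3 _ (hmemp s hs)).comp s (inp s)
      have h2 := (hder3 _ (hmemm s hs)).comp s (inm s)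
      have h3 := (h1.add h2).sub_const (2 * σ'' τ)
      have heq : σ''' (s + τ) * 1 + σ''' (-s + τ) * -1 =
          σ''' (s + τ) - σ''' (-s + τ) := by ring
      rw [heq] at h3
      exact h3)
    (by simp; ring) (by simp) (by simp; ring)
    (fun s hs => by
      have b1 := hbd3 _ (hmemp s hs)
      have b2 := hbd3 _ (hmemm s hs)
      calc |σ''' (s + τ) - σ''' (-s + τ)| ≤ |σ''' (s + τ)| + |σ''' (-s + τ)| := abs_sub _ _
        _ ≤ 2 * M := by linarith)
  intro s hs
  have := key s hs
  calc |σ (s + τ) + σ (-s + τ) - 2 * σ τ - σ'' τ * s ^ 2| ≤ 2 * M * s ^ 3 / 6 := this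
    _ = M * s ^ 3 / 3 := by ring

/-- Corollary 6 (first layer): summing `n` supernodes
`h(x,a) = (a²/σ''(τ))·(σ(x/a+τ) + σ(−x/a+τ) − 2σ(τ))` coordinatewise yields
`ĝ(x) = Σᵢ h(xᵢ,a)` which approximates `g(x) = Σᵢ xᵢ²` within `n·ν` wherever `g(x) ≤ 4R²`,
is non-negative everywhere, and is at least `4R² − n·ν` wherever `g(x) > 4R²`. -/
theorem stmt4 (n : ℕ) (σ σ' σ'' σ''' : ℝ → ℝ) (τ r M : ℝ) (hr : 0 < r) (hM : 0 < M)
    (hder1 : ∀ x ∈ Set.Icc (τ - r) (τ + r), HasDerivAt σ (σ' x) x)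
    (hder2 : ∀ x ∈ Set.Icc (τ - r) (τ + r), HasDerivAt σ' (σ'' x) x)
    (hder3 : ∀ x ∈ Set.Icc (τ - r) (τ + r), HasDerivAt σ'' (σ''' x) x)
    (hcurv : 0 < σ'' τ)
    (hbd3 : ∀ x ∈ Set.Icc (τ - r) (τ + r), |σ''' x| ≤ M)
    (hmono : ∀ x y : ℝ, 0 ≤ x → x ≤ y →
      σ (x + τ) + σ (-x + τ) ≤ σ (y + τ) + σ (-y + τ))
    (h : ℝ → ℝ → ℝ)
    (hh : ∀ x b : ℝ, h x b = b ^ 2 / σ'' τ * (σ (x / b + τ) + σ (-x / b + τ) - 2 * σ τ))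
    (R ν a : ℝ) (hR : 0 < R) (hν : 0 < ν)
    (ha1 : a ≥ 2 * R / r)
    (ha2 : a ≥ 8 * M * R ^ 3 / (3 * ν * σ'' τ))
    (ha3 : a ≥ 4 * M * R / (3 * σ'' τ))
    (g ghat : (Fin n → ℝ) → ℝ)
    (hg : ∀ x, g x = ∑ i, (x i) ^ 2)
    (hghat : ∀ x, ghat x = ∑ i, h (x i) a) :
    (∀ x : Fin n → ℝ, 0 ≤ ghat x) ∧
    (∀ x : Fin n → ℝ, g x ≤ 4 * R ^ 2 → |ghat x - g x| ≤ n * ν) ∧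
    (∀ x : Fin n → ℝ, g x > 4 * R ^ 2 → ghat x ≥ 4 * R ^ 2 - n * ν) := by
  have hc : 0 < σ'' τ := hcurv
  have ha0 : 0 < a := lt_of_lt_of_le (by positivity) ha1
  have key := aux_taylor σ σ' σ'' σ''' τ r M hr hder1 hder2 hder3 hbd3
  -- h is even in its first argument
  have heven : ∀ x : ℝ, h x a = h |x| a := by
    intro x
    rcases abs_cases x with ⟨h1, _⟩ | ⟨h1, _⟩
    · rw [h1]
    · rw [hh, hh, h1, neg_neg]
      ring
  -- h is monotone in nonnegative first argument
  have hmonoh : ∀ x y : ℝ, 0 ≤ x → x ≤ y → h x a ≤ h y a := by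
    intro x y hx hxy
    rw [hh, hh]
    apply mul_le_mul_of_nonneg_left _ (by positivity : (0:ℝ) ≤ a ^ 2 / σ'' τ)
    have hdiv : x / a ≤ y / a := (div_le_div_iff_of_pos_right ha0).mpr hxy
    have hm := hmono (x / a) (y / a) (div_nonneg hx ha0.le) hdiv
    have e1 : -x / a = -(x / a) := neg_div _ _
    have e2 : -y / a = -(y / a) := neg_div _ _
    rw [e1, e2]
    linarith
  -- h is nonnegative
  have hnn : ∀ x : ℝ, 0 ≤ h x a := by
    intro x
    have h0 : h 0 a = 0 := by rw [hh]; norm_num; right; ring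
    rw [heven x]
    calc (0:ℝ) = h 0 a := h0.symm
      _ ≤ h |x| a := hmonoh 0 |x| le_rfl (abs_nonneg x)
  -- key approximation
  have happrox : ∀ x : ℝ, |x| ≤ 2 * R → |h x a - x ^ 2| ≤ ν := by
    intro x hx
    have h2Rra : 2 * R ≤ r * a := by
      rw [ge_iff_le, div_le_iff₀ hr] at ha1; linarith
    have hs : |x| / a ∈ Set.Icc (0:ℝ) r := by
      constructor
      · positivity
      · rw [div_le_iff₀ ha0]; linarith
    have hE := key _ hs
    have e : a ^ 2 / σ'' τ * (σ'' τ * (|x| / a) ^ 2) = x ^ 2 := by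
      rw [div_pow, sq_abs]
      field_simp
    have hrewrite : h x a - x ^ 2 =
        a ^ 2 / σ'' τ * (σ (|x| / a + τ) + σ (-(|x| / a) + τ) - 2 * σ τ - σ'' τ * (|x| / a) ^ 2) := by
      rw [heven x, hh, neg_div]
      have e2 : (|x| / a) ^ 2 = x ^ 2 / a ^ 2 := by rw [div_pow, sq_abs]
      rw [e2]
      field_simp
    rw [hrewrite, abs_mul, abs_of_nonneg (by positivity : (0:ℝ) ≤ a ^ 2 / σ'' τ)]
    have hcube : |x| ^ 3 ≤ (2 * R) ^ 3 := pow_le_pow_left₀ (abs_nonneg x) hx 3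
    have step : a ^ 2 / σ'' τ * |σ (|x| / a + τ) + σ (-(|x| / a) + τ) - 2 * σ τ - σ'' τ * (|x| / a) ^ 2|
        ≤ a ^ 2 / σ'' τ * (M * (|x| / a) ^ 3 / 3) :=
      mul_le_mul_of_nonneg_left hE (by positivity)
    have hsimp : a ^ 2 / σ'' τ * (M * (|x| / a) ^ 3 / 3) = M * |x| ^ 3 / (3 * a * σ'' τ) := by
      field_simp
    have hfin : M * |x| ^ 3 / (3 * a * σ'' τ) ≤ ν := by
      rw [div_le_iff₀ (by positivity : (0:ℝ) < 3 * a * σ'' τ)]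
      rw [ge_iff_le, div_le_iff₀ (by positivity : (0:ℝ) < 3 * ν * σ'' τ)] at ha2
      nlinarith [hM.le, hcube]
    calc a ^ 2 / σ'' τ * |σ (|x| / a + τ) + σ (-(|x| / a) + τ) - 2 * σ τ - σ'' τ * (|x| / a) ^ 2|
        ≤ a ^ 2 / σ'' τ * (M * (|x| / a) ^ 3 / 3) := step
      _ = M * |x| ^ 3 / (3 * a * σ'' τ) := hsimp
      _ ≤ ν := hfin
  refine ⟨?_, ?_, ?_⟩
  · intro x
    rw [hghat]
    exact Finset.sum_nonneg fun i _ => hnn _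
  · intro x hgx
    have hxi : ∀ i, |x i| ≤ 2 * R := by
      intro i
      have h1 : (x i) ^ 2 ≤ 4 * R ^ 2 := by
        rw [hg] at hgx
        have hle : (x i) ^ 2 ≤ ∑ j, (x j) ^ 2 := by
          simpa using Finset.single_le_sum (f := fun i => (x i) ^ 2)
            (fun j _ => sq_nonneg _) (Finset.mem_univ i)
        linarith
      nlinarith [abs_nonneg (x i), sq_abs (x i)]
    rw [hghat, hg, ← Finset.sum_sub_distrib]
    calc |∑ i, (h (x i) a - (x i) ^ 2)| ≤ ∑ i, |h (x i) a - (x i) ^ 2| :=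
          Finset.abs_sum_le_sum_abs _ _
      _ ≤ ∑ _i : Fin n, ν := Finset.sum_le_sum fun i _ => happrox _ (hxi i)
      _ = n * ν := by simp [mul_comm]
  · intro x hgx
    have hterm : ∀ i, min ((x i) ^ 2) (4 * R ^ 2) - ν ≤ h (x i) a := by
      intro i
      by_cases hc2 : (x i) ^ 2 ≤ 4 * R ^ 2
      · have habs : |x i| ≤ 2 * R := by nlinarith [abs_nonneg (x i), sq_abs (x i)]
        have h1 := (abs_le.mp (happrox (x i) habs)).1
        have h2 : min ((x i) ^ 2) (4 * R ^ 2) ≤ (x i) ^ 2 := min_le_left _ _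
        linarith
      · push_neg at hc2
        have habs : 2 * R ≤ |x i| := by nlinarith [abs_nonneg (x i), sq_abs (x i)]
        have h2R := (abs_le.mp (happrox (2 * R) (by rw [abs_of_nonneg (by positivity)]))).1
        have hmm : h (2 * R) a ≤ h |x i| a := hmonoh _ _ (by positivity) habs
        have hminr : min ((x i) ^ 2) (4 * R ^ 2) = 4 * R ^ 2 := min_eq_right hc2.le
        rw [hminr, heven (x i)]
        have e4 : (2 * R) ^ 2 = 4 * R ^ 2 := by ring
        linarith
    have hsum : ∑ i, (min ((x i) ^ 2) (4 * R ^ 2) - ν) ≤ ghat x := by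
      rw [hghat]
      exact Finset.sum_le_sum fun i _ => hterm i
    have hminsum : 4 * R ^ 2 ≤ ∑ i, min ((x i) ^ 2) (4 * R ^ 2) := by
      by_cases hall : ∀ i, (x i) ^ 2 ≤ 4 * R ^ 2
      · have heq : ∑ i, min ((x i) ^ 2) (4 * R ^ 2) = ∑ i, (x i) ^ 2 :=
          Finset.sum_congr rfl fun i _ => min_eq_left (hall i)
        rw [heq, ← hg]
        linarith
      · push_neg at hall
        obtain ⟨j, hj⟩ := hall
        have h1 : min ((x j) ^ 2) (4 * R ^ 2) = 4 * R ^ 2 := min_eq_right hj.le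
        have h2 : min ((x j) ^ 2) (4 * R ^ 2) ≤ ∑ i, min ((x i) ^ 2) (4 * R ^ 2) := by
          simpa using Finset.single_le_sum (f := fun i => min ((x i) ^ 2) (4 * R ^ 2))
            (fun i _ => le_min (sq_nonneg _) (by positivity)) (Finset.mem_univ j)
        rw [h1] at h2
        exact h2
    have hsplit : ∑ i, (min ((x i) ^ 2) (4 * R ^ 2) - ν)
        = (∑ i, min ((x i) ^ 2) (4 * R ^ 2)) - n * ν := by
      rw [Finset.sum_sub_distrib]
      simp [mul_comm]
    linarith [hsum, hminsum, hsplit.ge, hsplit.le]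
end

section
/- Let 0 < δ < 2 and 0 < λ < 1/(1 + δ/4). Let ĝ(x) = Σ_{i=1}^n h(x_i,a) be the first-layer function of the preceding corollary with range parameter R = √(log(1/λ)) and accuracy parameter ν = (1/n)·log(1 + δ/4), where h is built from an activation σ satisfying: σ is three times differentiable on [τ−r, τ+r] with σ''(τ) > 0 and |σ'''| ≤ M there, x ↦ σ(x+τ)+σ(−x+τ) is increasing for x ≥ 0, and a ≥ max(2R/r, 8MR³/(3ν·σ''(τ)), 4MR/(3σ''(τ))). Let ψ(·,σ₂) be a second-layer supernode function satisfying |ψ(x,σ₂) − exp(−x)| ≤ (δ/2)·exp(−x) for 0 ≤ x ≤ T and 0 ≤ ψ(x,σ₂) ≤ exp(−T)·(1 + δ/2) for x ≥ T, with range parameter T = 4R². Define ĉ(x) = ψ(ĝ(x), σ₂) and c(x) = exp(−g(x)) with g(x) = Σ_{i=1}^n x_i². Then: (i) |ĉ(x) − c(x)| < δ·c(x) whenever c(x) ≥ λ; and (ii) ĉ(x) < λ(1+δ) whenever c(x) < λ. -/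
open Set

lemma taylor_even_bound (σ σ' σ'' σ''' : ℝ → ℝ) (τ r M : ℝ) (hr : 0 < r) (hM : 0 ≤ M)
    (hder1 : ∀ x ∈ Set.Icc (τ - r) (τ + r), HasDerivAt σ (σ' x) x)
    (hder2 : ∀ x ∈ Set.Icc (τ - r) (τ + r), HasDerivAt σ' (σ'' x) x)
    (hder3 : ∀ x ∈ Set.Icc (τ - r) (τ + r), HasDerivAt σ'' (σ''' x) x)
    (hbd3 : ∀ x ∈ Set.Icc (τ - r) (τ + r), |σ''' x| ≤ M) :
    ∀ y ∈ Set.Icc (0:ℝ) r,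
      |σ (y + τ) + σ (-y + τ) - 2 * σ τ - σ'' τ * y ^ 2| ≤ M / 3 * y ^ 3 := by
  set F : ℝ → ℝ := fun t => σ (t + τ) + σ (-t + τ) - 2 * σ τ - σ'' τ * t ^ 2 with hF
  set F₁ : ℝ → ℝ := fun t => σ' (t + τ) - σ' (-t + τ) - 2 * σ'' τ * t with hF₁
  set F₂ : ℝ → ℝ := fun t => σ'' (t + τ) + σ'' (-t + τ) - 2 * σ'' τ with hF₂
  have hmem1 : ∀ t ∈ Set.Icc (-r) r, t + τ ∈ Set.Icc (τ - r) (τ + r) := by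
    intro t ht; exact ⟨by linarith [ht.1], by linarith [ht.2]⟩
  have hmem2 : ∀ t ∈ Set.Icc (-r) r, -t + τ ∈ Set.Icc (τ - r) (τ + r) := by
    intro t ht; exact ⟨by linarith [ht.2], by linarith [ht.1]⟩
  -- derivative of F
  have hFd : ∀ t ∈ Set.Icc (-r) r, HasDerivAt F (F₁ t) t := by
    intro t ht
    have h1 : HasDerivAt (fun s => σ (s + τ)) (σ' (t + τ)) t := by
      simpa [Function.comp_def] using (HasDerivAt.comp t (hder1 _ (hmem1 t ht)) ((hasDerivAt_id t).add_const τ))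
    have h2 : HasDerivAt (fun s => σ (-s + τ)) (-(σ' (-t + τ))) t := by
      have hinner : HasDerivAt (fun s : ℝ => -s + τ) (-1) t := by
        simpa using ((hasDerivAt_id t).neg.add_const τ)
      simpa [Function.comp_def] using (HasDerivAt.comp t (hder1 _ (hmem2 t ht)) hinner)
    have h3 : HasDerivAt (fun s : ℝ => σ'' τ * s ^ 2) (σ'' τ * (2 * t)) t := by
      simpa [mul_comm] using ((hasDerivAt_pow 2 t).const_mul (σ'' τ))
    have := ((h1.add h2).sub_const (2 * σ τ)).sub h3
    exact this.congr_deriv (by simp only [hF₁]; ring)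
  -- derivative of F₁
  have hF₁d : ∀ t ∈ Set.Icc (-r) r, HasDerivAt F₁ (F₂ t) t := by
    intro t ht
    have h1 : HasDerivAt (fun s => σ' (s + τ)) (σ'' (t + τ)) t := by
      simpa [Function.comp_def] using (HasDerivAt.comp t (hder2 _ (hmem1 t ht)) ((hasDerivAt_id t).add_const τ))
    have h2 : HasDerivAt (fun s => σ' (-s + τ)) (-(σ'' (-t + τ))) t := by
      have hinner : HasDerivAt (fun s : ℝ => -s + τ) (-1) t := by
        simpa using ((hasDerivAt_id t).neg.add_const τ)
      simpa [Function.comp_def] using (HasDerivAt.comp t (hder2 _ (hmem2 t ht)) hinner)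
    have h3 : HasDerivAt (fun s : ℝ => 2 * σ'' τ * s) (2 * σ'' τ) t := by
      simpa using ((hasDerivAt_id t).const_mul (2 * σ'' τ))
    have := (h1.sub h2).sub h3
    exact this.congr_deriv (by simp only [hF₂]; ring)
  -- derivative of F₂
  have hF₂d : ∀ t ∈ Set.Icc (-r) r, HasDerivAt F₂ (σ''' (t + τ) - σ''' (-t + τ)) t := by
    intro t ht
    have h1 : HasDerivAt (fun s => σ'' (s + τ)) (σ''' (t + τ)) t := by
      simpa [Function.comp_def] using (HasDerivAt.comp t (hder3 _ (hmem1 t ht)) ((hasDerivAt_id t).add_const τ))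
    have h2 : HasDerivAt (fun s => σ'' (-s + τ)) (-(σ''' (-t + τ))) t := by
      have hinner : HasDerivAt (fun s : ℝ => -s + τ) (-1) t := by
        simpa using ((hasDerivAt_id t).neg.add_const τ)
      simpa [Function.comp_def] using (HasDerivAt.comp t (hder3 _ (hmem2 t ht)) hinner)
    have := (h1.add h2).sub_const (2 * σ'' τ)
    exact this.congr_deriv (by ring)
  -- F₂ is 2M-Lipschitz on [-r,r], F₂ 0 = 0
  have hF₂0 : F₂ 0 = 0 := by simp [hF₂]; ring
  have hF₂bd : ∀ t ∈ Set.Icc (0:ℝ) r, |F₂ t| ≤ 2 * M * t := by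
    intro t ht
    have ht' : t ∈ Set.Icc (-r) r := ⟨by linarith [ht.1], ht.2⟩
    have h0 : (0:ℝ) ∈ Set.Icc (-r) r := ⟨by linarith, hr.le⟩
    have := Convex.norm_image_sub_le_of_norm_hasDerivWithin_le
      (f := F₂) (f' := fun t => σ''' (t + τ) - σ''' (-t + τ)) (s := Set.Icc (-r) r)
      (C := 2 * M)
      (fun u hu => (hF₂d u hu).hasDerivWithinAt)
      (fun u hu => by
        have b1 := hbd3 _ (hmem1 u hu)
        have b2 := hbd3 _ (hmem2 u hu)
        calc ‖σ''' (u + τ) - σ''' (-u + τ)‖ ≤ |σ''' (u + τ)| + |σ''' (-u + τ)| := abs_sub _ _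
          _ ≤ 2 * M := by linarith)
      (convex_Icc _ _) h0 ht'
    rw [hF₂0, sub_zero, Real.norm_eq_abs, Real.norm_eq_abs, sub_zero] at this
    calc |F₂ t| ≤ 2 * M * |t| := this
      _ = 2 * M * t := by rw [abs_of_nonneg ht.1]
  -- |F₁ t| ≤ M t² on [0,r]
  have hF₁0 : F₁ 0 = 0 := by simp [hF₁]
  have hF₁bd : ∀ t ∈ Set.Icc (0:ℝ) r, |F₁ t| ≤ M * t ^ 2 := by
    have key := image_norm_le_of_norm_deriv_right_le_deriv_boundary
      (f := F₁) (f' := F₂) (a := (0:ℝ)) (b := r)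
      (B := fun t => M * t ^ 2) (B' := fun t => 2 * M * t)
      (fun t ht => by
        have ht' : t ∈ Set.Icc (-r) r := ⟨by linarith [ht.1], ht.2⟩
        exact (hF₁d t ht').continuousAt.continuousWithinAt)
      (fun t ht => by
        have ht' : t ∈ Set.Icc (-r) r := ⟨by linarith [ht.1], ht.2.le⟩
        exact (hF₁d t ht').hasDerivWithinAt)
      (by rw [Real.norm_eq_abs, hF₁0]; simp)
      (fun t => by
        have := (hasDerivAt_pow 2 t).const_mul M
        exact this.congr_deriv (by norm_num; ring))
      (fun t ht => by
        rw [Real.norm_eq_abs]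
        exact hF₂bd t ⟨ht.1, ht.2.le⟩)
    intro t ht
    simpa [Real.norm_eq_abs] using key ht
  -- |F t| ≤ M/3 t³ on [0,r]
  have hFbd : ∀ t ∈ Set.Icc (0:ℝ) r, |F t| ≤ M / 3 * t ^ 3 := by
    have key := image_norm_le_of_norm_deriv_right_le_deriv_boundary
      (f := F) (f' := F₁) (a := (0:ℝ)) (b := r)
      (B := fun t => M / 3 * t ^ 3) (B' := fun t => M * t ^ 2)
      (fun t ht => by
        have ht' : t ∈ Set.Icc (-r) r := ⟨by linarith [ht.1], ht.2⟩
        exact (hFd t ht').continuousAt.continuousWithinAt)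
      (fun t ht => by
        have ht' : t ∈ Set.Icc (-r) r := ⟨by linarith [ht.1], ht.2.le⟩
        exact (hFd t ht').hasDerivWithinAt)
      (by rw [Real.norm_eq_abs]; simp [hF]; ring)
      (fun t => by
        have := (hasDerivAt_pow 3 t).const_mul (M / 3)
        exact this.congr_deriv (by norm_num; ring))
      (fun t ht => by
        rw [Real.norm_eq_abs]
        exact hF₁bd t ⟨ht.1, ht.2.le⟩)
    intro t ht
    simpa [Real.norm_eq_abs] using key ht
  exact hFbd

private lemma stmt6_final_i (cx u ps δ : ℝ) (hc0 : 0 < cx) (hu0 : 0 < u)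
    (hδ0 : 0 < δ) (hδ2 : δ < 2)
    (hE1 : u ≤ cx * (1 + δ / 4)) (hE2 : cx ≤ u * (1 + δ / 4))
    (hp1 : -(δ / 2 * u) ≤ ps - u) (hp2 : ps - u ≤ δ / 2 * u) :
    |ps - cx| < δ * cx := by
  rw [abs_lt]
  constructor
  · nlinarith [mul_le_mul_of_nonneg_left hE2 (by linarith : (0:ℝ) ≤ 1 - δ / 2),
      mul_le_mul_of_nonneg_left hE1 (by positivity : (0:ℝ) ≤ δ / 4),
      mul_pos hc0 hδ0, mul_pos hu0 hδ0]
  · nlinarith [mul_le_mul_of_nonneg_left hE1 (by positivity : (0:ℝ) ≤ δ / 2),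
      mul_pos hc0 hδ0]

private lemma stmt6_final_ii_a (lam u ps δ : ℝ) (hlam0 : 0 < lam) (hδ0 : 0 < δ)
    (hδ2 : δ < 2) (hu0 : 0 < u) (hEg : u ≤ lam * (1 + δ / 4))
    (hp : ps - u ≤ δ / 2 * u) : ps < lam * (1 + δ) := by
  nlinarith [mul_le_mul_of_nonneg_left hEg (by positivity : (0:ℝ) ≤ δ / 2),
    mul_pos hlam0 hδ0]

private lemma stmt6_final_ii_b (lam e ps δ : ℝ) (hlam0 : 0 < lam) (hδ0 : 0 < δ)
    (he0 : 0 < e) (hel : e ≤ lam) (hp : ps ≤ e * (1 + δ / 2)) :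
    ps < lam * (1 + δ) := by
  nlinarith [mul_le_mul_of_nonneg_right hel (by linarith : (0:ℝ) ≤ 1 + δ / 2),
    mul_pos hlam0 hδ0]

set_option maxHeartbeats 1000000 in
/-- Lemma 8 (accuracy of the composed layers): with first-layer range `R = √(log(1/λ))`,
first-layer accuracy `ν = (1/n)·log(1+δ/4)`, second-layer range `T = 4R²` and second-layer
relative accuracy `δ/2`, the composition `ĉ(x) = ψ(ĝ(x))` of the first-layer function
`ĝ(x) = Σᵢ h(xᵢ,a)` with a second-layer supernode `ψ` approximating `exp(−·)` satisfies
`|ĉ(x) − c(x)| < δ·c(x)` whenever `c(x) ≥ λ`, and `ĉ(x) < λ(1+δ)` whenever `c(x) < λ`,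
where `c(x) = exp(−‖x‖²)`. -/
theorem stmt6 (n : ℕ) (hn : 0 < n)
    (σ σ' σ'' σ''' : ℝ → ℝ) (τ r M : ℝ) (hr : 0 < r) (hM : 0 < M)
    (hder1 : ∀ x ∈ Set.Icc (τ - r) (τ + r), HasDerivAt σ (σ' x) x)
    (hder2 : ∀ x ∈ Set.Icc (τ - r) (τ + r), HasDerivAt σ' (σ'' x) x)
    (hder3 : ∀ x ∈ Set.Icc (τ - r) (τ + r), HasDerivAt σ'' (σ''' x) x)
    (hcurv : 0 < σ'' τ)
    (hbd3 : ∀ x ∈ Set.Icc (τ - r) (τ + r), |σ''' x| ≤ M)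
    (hmono : ∀ x y : ℝ, 0 ≤ x → x ≤ y →
      σ (x + τ) + σ (-x + τ) ≤ σ (y + τ) + σ (-y + τ))
    (h : ℝ → ℝ → ℝ)
    (hh : ∀ x b : ℝ, h x b = b ^ 2 / σ'' τ * (σ (x / b + τ) + σ (-x / b + τ) - 2 * σ τ))
    (δ lam : ℝ) (hδ0 : 0 < δ) (hδ2 : δ < 2)
    (hlam0 : 0 < lam) (hlam1 : lam < 1 / (1 + δ / 4))
    (R ν a T : ℝ)
    (hR : R = Real.sqrt (Real.log (1 / lam)))
    (hν : ν = (1 / (n : ℝ)) * Real.log (1 + δ / 4))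
    (hT : T = 4 * R ^ 2)
    (ha1 : a ≥ 2 * R / r)
    (ha2 : a ≥ 8 * M * R ^ 3 / (3 * ν * σ'' τ))
    (ha3 : a ≥ 4 * M * R / (3 * σ'' τ))
    (ψ : ℝ → ℝ)
    (hψ1 : ∀ x : ℝ, 0 ≤ x → x ≤ T → |ψ x - Real.exp (-x)| ≤ δ / 2 * Real.exp (-x))
    (hψ2 : ∀ x : ℝ, T ≤ x → 0 ≤ ψ x ∧ ψ x ≤ Real.exp (-T) * (1 + δ / 2))
    (g ghat c chat : (Fin n → ℝ) → ℝ)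
    (hg : ∀ x, g x = ∑ i, (x i) ^ 2)
    (hghat : ∀ x, ghat x = ∑ i, h (x i) a)
    (hc : ∀ x, c x = Real.exp (-(g x)))
    (hchat : ∀ x, chat x = ψ (ghat x)) :
    (∀ x : Fin n → ℝ, c x ≥ lam → |chat x - c x| < δ * c x) ∧
    (∀ x : Fin n → ℝ, c x < lam → chat x < lam * (1 + δ)) := by
  -- basic positivity facts
  have hδ4 : (0:ℝ) < 1 + δ / 4 := by linarith
  set L : ℝ := Real.log (1 + δ / 4) with hLdef
  have hL0 : 0 < L := Real.log_pos (by linarith)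
  have hn' : (0:ℝ) < (n:ℝ) := by exact_mod_cast hn
  have hnν : (n:ℝ) * ν = L := by rw [hν]; field_simp
  have hν0 : 0 < ν := by
    rw [hν]; positivity
  have hνL : ν ≤ L := by
    have h1n : (1:ℝ) ≤ (n:ℝ) := by exact_mod_cast hn
    nlinarith [mul_le_mul_of_nonneg_right h1n hν0.le]
  have hlaminv : 1 + δ / 4 < 1 / lam := by
    rw [lt_div_iff₀ hlam0]
    rw [lt_div_iff₀ hδ4] at hlam1
    linarith
  have hloglam : 0 < Real.log (1 / lam) := Real.log_pos (by linarith)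
  have hR2 : R ^ 2 = Real.log (1 / lam) := by
    rw [hR, sq, Real.mul_self_sqrt hloglam.le]
  have hR0 : 0 < R := by
    rw [hR]; exact Real.sqrt_pos.mpr hloglam
  have hexpR : Real.exp (-(R ^ 2)) = lam := by
    rw [hR2, Real.log_div one_ne_zero (ne_of_gt hlam0), Real.log_one]
    simp [Real.exp_log hlam0]
  have hLR : L < R ^ 2 := by
    rw [hR2]; exact Real.log_lt_log hδ4 hlaminv
  have ha0 : 0 < a := lt_of_lt_of_le (by positivity) ha1
  have hexpL : Real.exp L = 1 + δ / 4 := Real.exp_log hδ4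
  -- symmetry of the supernode expression
  have hsymm : ∀ x : ℝ, σ (x / a + τ) + σ (-x / a + τ) = σ (|x| / a + τ) + σ (-(|x| / a) + τ) := by
    intro x
    rcases abs_cases x with ⟨h1, _⟩ | ⟨h1, _⟩ <;> rw [h1] <;>
      simp only [neg_div, neg_neg] <;> first | rfl | exact add_comm _ _
  -- nonnegativity of h
  have hh0 : ∀ x : ℝ, 0 ≤ h x a := by
    intro x
    rw [hh, hsymm]
    have := hmono 0 (|x| / a) le_rfl (by positivity)
    simp only [zero_add, neg_zero] at this
    have hfac : (0:ℝ) ≤ a ^ 2 / σ'' τ := by positivity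
    exact mul_nonneg hfac (by linarith)
  -- the key accuracy estimate
  have taylor := taylor_even_bound σ σ' σ'' σ''' τ r M hr hM.le hder1 hder2 hder3 hbd3
  have key1 : ∀ x : ℝ, |x| ≤ 2 * R → |h x a - x ^ 2| ≤ ν := by
    intro x hx
    set s : ℝ := |x| with hs
    have hs0 : 0 ≤ s := abs_nonneg x
    have hy : s / a ∈ Set.Icc (0:ℝ) r := by
      constructor
      · positivity
      · rw [div_le_iff₀ ha0]
        have : 2 * R ≤ a * r := by
          rw [ge_iff_le, div_le_iff₀ hr] at ha1
          linarith
        nlinarith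
    have hF := taylor (s / a) hy
    have heq : h x a - x ^ 2 =
        a ^ 2 / σ'' τ * (σ (s / a + τ) + σ (-(s / a) + τ) - 2 * σ τ - σ'' τ * (s / a) ^ 2) := by
      rw [hh, hsymm, ← sq_abs x, ← hs]
      field_simp
    rw [heq, abs_mul, abs_of_nonneg (by positivity : (0:ℝ) ≤ a ^ 2 / σ'' τ)]
    have step1 : a ^ 2 / σ'' τ * |σ (s / a + τ) + σ (-(s / a) + τ) - 2 * σ τ - σ'' τ * (s / a) ^ 2|
        ≤ a ^ 2 / σ'' τ * (M / 3 * (s / a) ^ 3) := by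
      apply mul_le_mul_of_nonneg_left hF (by positivity)
    refine le_trans step1 ?_
    have heq2 : a ^ 2 / σ'' τ * (M / 3 * (s / a) ^ 3) = M * s ^ 3 / (3 * a * σ'' τ) := by
      field_simp
    rw [heq2, div_le_iff₀ (by positivity : (0:ℝ) < 3 * a * σ'' τ)]
    have hs3 : s ^ 3 ≤ 8 * R ^ 3 := by
      calc s ^ 3 ≤ (2 * R) ^ 3 := pow_le_pow_left₀ hs0 hx 3
        _ = 8 * R ^ 3 := by ring
    have ha2' : 8 * M * R ^ 3 ≤ a * (3 * ν * σ'' τ) := by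
      rw [ge_iff_le, div_le_iff₀ (by positivity : (0:ℝ) < 3 * ν * σ'' τ)] at ha2
      linarith
    calc M * s ^ 3 ≤ M * (8 * R ^ 3) := mul_le_mul_of_nonneg_left hs3 hM.le
      _ = 8 * M * R ^ 3 := by ring
      _ ≤ a * (3 * ν * σ'' τ) := ha2'
      _ = ν * (3 * a * σ'' τ) := by ring
  -- monotonicity of h beyond 2R
  have key2 : ∀ x : ℝ, 2 * R ≤ |x| → h (2 * R) a ≤ h x a := by
    intro x hx
    rw [hh, hh, hsymm x, neg_div]
    have hmm := hmono (2 * R / a) (|x| / a) (by positivity) (by gcongr)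
    have hfac : (0:ℝ) ≤ a ^ 2 / σ'' τ := by positivity
    exact mul_le_mul_of_nonneg_left (by linarith) hfac
  -- per-point estimates
  have sum_est : ∀ x : Fin n → ℝ, (∀ i, |x i| ≤ 2 * R) → |ghat x - g x| ≤ L := by
    intro x hx
    rw [hghat, hg, ← Finset.sum_sub_distrib]
    calc |∑ i, (h (x i) a - (x i) ^ 2)| ≤ ∑ i, |h (x i) a - (x i) ^ 2| :=
          Finset.abs_sum_le_sum_abs _ _
      _ ≤ ∑ _i : Fin n, ν := Finset.sum_le_sum (fun i _ => key1 (x i) (hx i))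
      _ = (n:ℝ) * ν := by simp [Finset.sum_const, mul_comm]
      _ = L := hnν
  have ghat_nonneg : ∀ x : Fin n → ℝ, 0 ≤ ghat x := by
    intro x; rw [hghat]
    exact Finset.sum_nonneg (fun i _ => hh0 (x i))
  constructor
  · -- part (i)
    intro x hcx
    have hc0 : 0 < c x := lt_of_lt_of_le hlam0 hcx
    rw [hc] at hcx
    rw [← hexpR] at hcx
    have hgx : g x ≤ R ^ 2 := by
      have := Real.exp_le_exp.mp hcx
      linarith
    have hxi : ∀ i, |x i| ≤ 2 * R := by
      intro i
      have h1 : (x i) ^ 2 ≤ g x := by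
        rw [hg]
        exact Finset.single_le_sum (fun j _ => sq_nonneg (x j)) (Finset.mem_univ i)
      have h2 : (x i) ^ 2 ≤ (2 * R) ^ 2 := by
        have e1 : (2 * R) ^ 2 = 4 * R ^ 2 := by ring
        rw [e1]; linarith [sq_nonneg R]
      have := Real.sqrt_le_sqrt h2
      rwa [Real.sqrt_sq_eq_abs, Real.sqrt_sq (by positivity)] at this
    have hdiff := sum_est x hxi
    have hdiff' := abs_le.mp hdiff
    have hghatT : ghat x ≤ T := by
      rw [hT]; linarith [sq_nonneg R]
    have hψ := abs_le.mp (hψ1 (ghat x) (ghat_nonneg x) hghatT)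
    set u : ℝ := Real.exp (-(ghat x)) with hu
    have hu0 : 0 < u := Real.exp_pos _
    have hE1 : u ≤ c x * (1 + δ / 4) := by
      calc u ≤ Real.exp (-(g x) + L) := Real.exp_le_exp.mpr (by linarith)
        _ = c x * (1 + δ / 4) := by rw [Real.exp_add, hexpL, hc]
    have hE2 : c x ≤ u * (1 + δ / 4) := by
      calc c x = Real.exp (-(g x)) := hc x
        _ ≤ Real.exp (-(ghat x) + L) := Real.exp_le_exp.mpr (by linarith)
        _ = u * (1 + δ / 4) := by rw [Real.exp_add, hexpL]
    rw [hchat]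
    exact stmt6_final_i (c x) u (ψ (ghat x)) δ hc0 hu0 hδ0 hδ2 hE1 hE2 hψ.1 hψ.2
  · -- part (ii)
    intro x hcx
    rw [hc, ← hexpR] at hcx
    have hgx : R ^ 2 < g x := by
      have := Real.exp_lt_exp.mp hcx
      linarith
    have hglow : R ^ 2 - L ≤ ghat x := by
      by_cases hA : ∀ i, |x i| ≤ 2 * R
      · have hdiff' := abs_le.mp (sum_est x hA)
        linarith
      · push_neg at hA
        obtain ⟨j, hj⟩ := hA
        have h1 : h (x j) a ≤ ghat x := by
          rw [hghat]
          exact Finset.single_le_sum (fun i _ => hh0 (x i)) (Finset.mem_univ j)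
        have h2 : h (2 * R) a ≤ h (x j) a := key2 (x j) hj.le
        have h3 : |h (2 * R) a - (2 * R) ^ 2| ≤ ν := by
          apply key1
          rw [abs_of_nonneg (by positivity)]
        have h3' := abs_le.mp h3
        have e1 : (2 * R) ^ 2 = 4 * R ^ 2 := by ring
        rw [e1] at h3'
        linarith [sq_nonneg R]
    have hEg : Real.exp (-(ghat x)) ≤ lam * (1 + δ / 4) := by
      calc Real.exp (-(ghat x)) ≤ Real.exp (-(R ^ 2) + L) := Real.exp_le_exp.mpr (by linarith)
        _ = lam * (1 + δ / 4) := by rw [Real.exp_add, hexpR, hexpL]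
    rw [hchat]
    by_cases hT' : ghat x ≤ T
    · have hψ := abs_le.mp (hψ1 (ghat x) (ghat_nonneg x) hT')
      exact stmt6_final_ii_a lam (Real.exp (-(ghat x))) (ψ (ghat x)) δ hlam0 hδ0 hδ2
        (Real.exp_pos _) hEg hψ.2
    · push_neg at hT'
      have hψ := hψ2 (ghat x) hT'.le
      have hTlam : Real.exp (-T) ≤ lam := by
        rw [← hexpR]
        apply Real.exp_le_exp.mpr
        rw [hT]; linarith [sq_nonneg R]
      exact stmt6_final_ii_b lam (Real.exp (-T)) (ψ (ghat x)) δ hlam0 hδ0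
        (Real.exp_pos _) hTlam hψ.2
end

section
/- Let s_f, s_x > 0, let x ~ N(0, s_x·I_n) on ℝⁿ, let w ∈ ℝⁿ with ‖w‖ = 1, and let h : ℝ → ℝ satisfy E[(h(⟨w, x⟩))²] = 1. Define μ_c(x) = ((s_f + 2s_x)/s_f)^{n/4}·exp(−‖x‖²/(2s_f)). Then |E[μ_c(x)·h(⟨w, x⟩)]| ≤ ρ^{−n/4}·(1 + s_x/s_f)^{1/4}, where ρ = 1 + s_x²/(s_f² + 2·s_x·s_f). -/
open MeasureTheory

/-- The distribution `N(0, s·Iₙ)` on `ℝⁿ`, given as a density with respect to Lebesgue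
measure. -/
noncomputable def gaussMeasure (n : ℕ) (s : ℝ) : Measure (Fin n → ℝ) :=
  MeasureTheory.volume.withDensity fun x =>
    ENNReal.ofReal ((2 * Real.pi * s) ^ (-(n : ℝ) / 2) *
      Real.exp (-(∑ i, (x i) ^ 2) / (2 * s)))

open Real
open scoped ENNReal NNReal

lemma key (m : ℕ) (w : Fin (m+1) → ℝ) (hw : ∑ j, (w j) ^ 2 = 1) (a : ℝ) (ha : 0 < a)
    (H : ℝ → ℝ) :
    ∫ x : Fin (m+1) → ℝ, Real.exp (-a * ∑ i, (x i) ^ 2) * H (∑ j, w j * x j)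
      = Real.sqrt (π / a) ^ m * ∫ u : ℝ, Real.exp (-a * u ^ 2) * H u := by
  classical
  set w' : EuclideanSpace ℝ (Fin (m+1)) := (WithLp.equiv 2 (Fin (m+1) → ℝ)).symm w with hw'
  have hw'app : ∀ j, w' j = w j := fun j => rfl
  have horth : Orthonormal ℝ (({0} : Set (Fin (m+1))).restrict (fun _ => w')) := by
    rw [orthonormal_iff_ite]
    intro i j
    have hij : i = j := Subtype.ext (by
      have hi := i.2; have hj := j.2
      simp only [Set.mem_singleton_iff] at hi hj
      rw [hi, hj])
    rw [if_pos hij]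
    show (inner ℝ w' w' : ℝ) = 1
    rw [PiLp.inner_apply]
    simp only [RCLike.inner_apply, conj_trivial]
    rw [← hw]
    exact Finset.sum_congr rfl fun j _ => by rw [hw'app]; ring
  obtain ⟨b, hb0⟩ := horth.exists_orthonormalBasis_extension_of_card_eq
    (by rw [finrank_euclideanSpace_fin, Fintype.card_fin])
  have hb0' : b 0 = w' := hb0 0 rfl
  set F : (Fin (m+1) → ℝ) → ℝ :=
    fun x => Real.exp (-a * ∑ i, (x i) ^ 2) * H (∑ j, w j * x j) with hF
  set G : (Fin (m+1) → ℝ) → ℝ :=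
    fun x => Real.exp (-a * ∑ i, (x i) ^ 2) * H (x 0) with hG
  have e1 : ∫ y : EuclideanSpace ℝ (Fin (m+1)),
      (F ∘ ((MeasurableEquiv.toLp 2 (Fin (m+1) → ℝ)).symm)) y = ∫ x, F x :=
    (EuclideanSpace.volume_preserving_symm_measurableEquiv_toLp (Fin (m+1))).integral_comp' F
  have e2 : ∫ z : EuclideanSpace ℝ (Fin (m+1)),
      (F ∘ ((MeasurableEquiv.toLp 2 (Fin (m+1) → ℝ)).symm)) (b.measurableEquiv.symm z)
      = ∫ y : EuclideanSpace ℝ (Fin (m+1)),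
        (F ∘ ((MeasurableEquiv.toLp 2 (Fin (m+1) → ℝ)).symm)) y :=
    MeasurePreserving.integral_comp' (f := b.measurableEquiv.symm)
      (MeasurePreserving.symm _ b.measurePreserving_measurableEquiv) _
  have ptwise : ∀ z : EuclideanSpace ℝ (Fin (m+1)),
      (F ∘ ((MeasurableEquiv.toLp 2 (Fin (m+1) → ℝ)).symm)) (b.measurableEquiv.symm z)
      = (G ∘ ((MeasurableEquiv.toLp 2 (Fin (m+1) → ℝ)).symm)) z := by
    intro z
    have hnorm : ∑ i, ((b.repr.symm z : EuclideanSpace ℝ (Fin (m+1))) i) ^ 2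
        = ∑ i, (z i) ^ 2 := by
      have h1 : (inner ℝ (b.repr.symm z) (b.repr.symm z) : ℝ) = inner ℝ z z :=
        b.repr.symm.inner_map_map z z
      rw [PiLp.inner_apply, PiLp.inner_apply] at h1
      simpa [pow_two] using h1
    have hdot : ∑ j, w j * ((b.repr.symm z : EuclideanSpace ℝ (Fin (m+1))) j) = z 0 := by
      have h2 : (inner ℝ (b 0) (b.repr.symm z) : ℝ) = b.repr (b.repr.symm z) 0 :=
        (b.repr_apply_apply (b.repr.symm z) 0).symm
      rw [LinearIsometryEquiv.apply_symm_apply] at h2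
      rw [hb0', PiLp.inner_apply] at h2
      simp at h2; rw [← h2]; exact Finset.sum_congr rfl fun j _ => mul_comm _ _
    show F (b.repr.symm z) = G z
    rw [hF, hG]
    simp only []
    rw [hnorm, hdot]
  have e3 : ∫ z : EuclideanSpace ℝ (Fin (m+1)),
      (G ∘ ((MeasurableEquiv.toLp 2 (Fin (m+1) → ℝ)).symm)) z = ∫ x, G x :=
    (EuclideanSpace.volume_preserving_symm_measurableEquiv_toLp (Fin (m+1))).integral_comp' G
  have main : ∫ x, F x = ∫ x, G x := by
    rw [← e1, ← e3, ← e2]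
    exact congrArg (integral volume) (funext ptwise)
  -- now factorize ∫ G
  set f : Fin (m+1) → ℝ → ℝ :=
    fun i t => Real.exp (-a * t ^ 2) * (if i = 0 then H t else 1) with hf
  have hGprod : ∀ x : Fin (m+1) → ℝ, G x = ∏ i, f i (x i) := by
    intro x
    rw [hG, hf]
    simp only []
    rw [Finset.prod_mul_distrib, ← Real.exp_sum, ← Finset.mul_sum]
    congr 1
    simp
  have hprod : ∫ x, G x = ∏ i, ∫ t, f i t := by
    rw [show (fun x => G x) = fun x => ∏ i, f i (x i) from funext hGprod]
    exact MeasureTheory.integral_fintype_prod_eq_prod f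
  have hf0 : ∫ t, f 0 t = ∫ u : ℝ, Real.exp (-a * u ^ 2) * H u := by
    rw [hf]; norm_num
  have hfs : ∀ i : Fin m, ∫ t, f i.succ t = Real.sqrt (π / a) := by
    intro i
    rw [hf]
    simp only [if_neg (Fin.succ_ne_zero i), mul_one]
    exact integral_gaussian a
  rw [main, hprod, Fin.prod_univ_succ, hf0]
  rw [Finset.prod_congr rfl fun i _ => hfs i, Finset.prod_const, Finset.card_univ,
    Fintype.card_fin]
  ring

lemma final (m : ℕ) (sf sx ρ : ℝ) (hsf : 0 < sf) (hsx : 0 < sx)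
    (hρ : ρ = 1 + sx ^ 2 / (sf ^ 2 + 2 * sx * sf)) :
    ((sf + 2 * sx) / sf) ^ (((m : ℝ) + 1) / 4) * (2 * π * sx) ^ (-((m : ℝ) + 1) / 2) *
      Real.sqrt (2 * π * sf * sx / (sf + sx)) ^ m *
      (2 * π * sf * sx / (sf + 2 * sx)) ^ ((1 : ℝ) / 4) * (2 * π * sx) ^ ((1 : ℝ) / 4)
    ≤ ρ ^ (-((m : ℝ) + 1) / 4) * ((sf + sx) / sf) ^ ((1 : ℝ) / 4) := by
  have h2π : (0:ℝ) < 2 * π := by positivity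
  have hc1 : (0:ℝ) < 2 * π * sf * sx / (sf + sx) := by positivity
  have hc2 : (0:ℝ) < 2 * π * sf * sx / (sf + 2 * sx) := by positivity
  have hcx : (0:ℝ) < 2 * π * sx := by positivity
  have hQ : (0:ℝ) < (sf + 2 * sx) / sf := by positivity
  have hρ2 : ρ = (sf + sx) ^ 2 / (sf * (sf + 2 * sx)) := by
    rw [hρ]; field_simp; ring
  have hρpos : 0 < ρ := by rw [hρ2]; positivity
  have hPf : (0:ℝ) < (sf + sx) / sf := by positivity
  have hsqrt : Real.sqrt (2 * π * sf * sx / (sf + sx)) ^ m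
      = (2 * π * sf * sx / (sf + sx)) ^ ((m : ℝ) / 2) := by
    rw [Real.sqrt_eq_rpow, ← Real.rpow_natCast ((2 * π * sf * sx / (sf + sx)) ^ ((1:ℝ)/2)) m,
      ← Real.rpow_mul hc1.le]
    congr 1; ring
  rw [hsqrt]
  have hL : (0:ℝ) < ((sf + 2 * sx) / sf) ^ (((m : ℝ) + 1) / 4) *
      (2 * π * sx) ^ (-((m : ℝ) + 1) / 2) *
      (2 * π * sf * sx / (sf + sx)) ^ ((m : ℝ) / 2) *
      (2 * π * sf * sx / (sf + 2 * sx)) ^ ((1 : ℝ) / 4) * (2 * π * sx) ^ ((1 : ℝ) / 4) := by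
    positivity
  have hR : (0:ℝ) < ρ ^ (-((m : ℝ) + 1) / 4) * ((sf + sx) / sf) ^ ((1 : ℝ) / 4) := by
    positivity
  rw [← Real.log_le_log_iff hL hR]
  set F := Real.log sf with hF
  set X := Real.log sx with hX
  set P := Real.log (sf + sx) with hP
  set Q := Real.log (sf + 2 * sx) with hQl
  set T := Real.log (2 * π) with hT
  have lQ : Real.log ((sf + 2 * sx) / sf) = Q - F := by
    rw [Real.log_div (by positivity) (by positivity)]
  have lX : Real.log (2 * π * sx) = T + X := by
    rw [Real.log_mul (by positivity) (by positivity)]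
  have lc1 : Real.log (2 * π * sf * sx / (sf + sx)) = T + F + X - P := by
    rw [Real.log_div (by positivity) (by positivity), Real.log_mul (by positivity) (by positivity),
      Real.log_mul (by positivity) (by positivity)]
  have lc2 : Real.log (2 * π * sf * sx / (sf + 2 * sx)) = T + F + X - Q := by
    rw [Real.log_div (by positivity) (by positivity), Real.log_mul (by positivity) (by positivity),
      Real.log_mul (by positivity) (by positivity)]
  have lρ : Real.log ρ = 2 * P - (F + Q) := by
    rw [hρ2, Real.log_div (by positivity) (by positivity),
      Real.log_mul (by positivity) (by positivity), Real.log_pow]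
    push_cast; ring
  have lPf : Real.log ((sf + sx) / sf) = P - F := by
    rw [Real.log_div (by positivity) (by positivity)]
  have hlogL : Real.log (((sf + 2 * sx) / sf) ^ (((m : ℝ) + 1) / 4) *
      (2 * π * sx) ^ (-((m : ℝ) + 1) / 2) *
      (2 * π * sf * sx / (sf + sx)) ^ ((m : ℝ) / 2) *
      (2 * π * sf * sx / (sf + 2 * sx)) ^ ((1 : ℝ) / 4) * (2 * π * sx) ^ ((1 : ℝ) / 4))
      = (((m : ℝ) + 1) / 4) * (Q - F) + (-((m : ℝ) + 1) / 2) * (T + X)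
        + ((m : ℝ) / 2) * (T + F + X - P) + ((1 : ℝ) / 4) * (T + F + X - Q)
        + ((1 : ℝ) / 4) * (T + X) := by
    rw [Real.log_mul (by positivity) (by positivity),
      Real.log_mul (by positivity) (by positivity),
      Real.log_mul (by positivity) (by positivity),
      Real.log_mul (by positivity) (by positivity),
      Real.log_rpow hQ, Real.log_rpow hcx, Real.log_rpow hc1, Real.log_rpow hc2,
      Real.log_rpow hcx, lQ, lX, lc1, lc2]
  have hlogR : Real.log (ρ ^ (-((m : ℝ) + 1) / 4) * ((sf + sx) / sf) ^ ((1 : ℝ) / 4))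
      = (-((m : ℝ) + 1) / 4) * (2 * P - (F + Q)) + ((1 : ℝ) / 4) * (P - F) := by
    rw [Real.log_mul (by positivity) (by positivity), Real.log_rpow hρpos, Real.log_rpow hPf,
      lρ, lPf]
  rw [hlogL, hlogR]
  have hPQ : P ≤ Q := Real.log_le_log (by positivity) (by linarith)
  linarith

lemma cs (f g : ℝ → ℝ) (hf : MemLp f 2 volume) (hg : MemLp g 2 volume) :
    |∫ u, f u * g u| ≤ (∫ u, (f u) ^ 2) ^ ((1:ℝ)/2) * (∫ u, (g u) ^ 2) ^ ((1:ℝ)/2) := by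
  have hpq : Real.HolderConjugate 2 2 := Real.holderConjugate_iff.mpr ⟨by norm_num, by norm_num⟩
  have h2 : (ENNReal.ofReal (2:ℝ)) = 2 := by norm_num
  have hmain := integral_mul_norm_le_Lp_mul_Lq (μ := volume) hpq (h2 ▸ hf) (h2 ▸ hg)
  have habs : |∫ u, f u * g u| ≤ ∫ u, ‖f u‖ * ‖g u‖ := by
    have h1 := norm_integral_le_integral_norm (μ := volume) (fun u => f u * g u)
    rw [Real.norm_eq_abs] at h1
    refine h1.trans (le_of_eq ?_)
    congr 1; funext u
    rw [norm_mul]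
  have hsq : ∀ F : ℝ → ℝ, (∫ u, ‖F u‖ ^ (2:ℝ)) = ∫ u, (F u) ^ 2 := by
    intro F; congr 1; funext u
    rw [show ((2:ℝ)) = ((2:ℕ):ℝ) from by norm_num, Real.rpow_natCast]
    rw [Real.norm_eq_abs, sq_abs]
  rw [hsq f, hsq g] at hmain
  exact habs.trans hmain

lemma gauss_int (n : ℕ) (s : ℝ) (hs : 0 < s) (f : (Fin n → ℝ) → ℝ) :
    ∫ x, f x ∂(gaussMeasure n s)
      = ∫ x, ((2 * π * s) ^ (-(n : ℝ) / 2) * Real.exp (-(∑ i, (x i) ^ 2) / (2 * s))) * f x := by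
  have hd : ∀ x : Fin n → ℝ,
      0 ≤ (2 * π * s) ^ (-(n : ℝ) / 2) * Real.exp (-(∑ i, (x i) ^ 2) / (2 * s)) :=
    fun x => by positivity
  have hmeas : Measurable fun x : Fin n → ℝ =>
      Real.toNNReal ((2 * π * s) ^ (-(n : ℝ) / 2) * Real.exp (-(∑ i, (x i) ^ 2) / (2 * s))) := by
    apply Measurable.real_toNNReal
    apply Measurable.const_mul
    apply Real.measurable_exp.comp
    apply Measurable.div_const
    apply Measurable.neg
    exact Finset.measurable_sum _ fun i _ => (measurable_pi_apply i).pow_const 2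
  rw [gaussMeasure]
  rw [show (fun x : Fin n → ℝ => ENNReal.ofReal ((2 * π * s) ^ (-(n : ℝ) / 2) *
      Real.exp (-(∑ i, (x i) ^ 2) / (2 * s))))
    = fun x => ((Real.toNNReal ((2 * π * s) ^ (-(n : ℝ) / 2) *
      Real.exp (-(∑ i, (x i) ^ 2) / (2 * s)))) : ℝ≥0∞) from rfl]
  rw [integral_withDensity_eq_integral_smul hmeas f]
  congr 1; funext x
  rw [NNReal.smul_def, Real.coe_toNNReal _ (hd x)]
  rfl

/-- Single-node correlation bound: for `x ~ N(0, s_x·Iₙ)`, a unit-norm weight vector `w`,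
and an activation `h` with `E[(h(⟨w,x⟩))²] = 1`, the correlation of the node output with the
normalized Gaussian target `μ_c(x) = ((s_f+2s_x)/s_f)^{n/4}·exp(−‖x‖²/(2s_f))` satisfies
`|E[μ_c(x)·h(⟨w,x⟩)]| ≤ ρ^{−n/4}·(1+s_x/s_f)^{1/4}` with
`ρ = 1 + s_x²/(s_f²+2s_x·s_f)`. -/
theorem stmt11 (n : ℕ) (sf sx : ℝ) (hsf : 0 < sf) (hsx : 0 < sx)
    (μc : (Fin n → ℝ) → ℝ)
    (hμc : ∀ x, μc x = ((sf + 2 * sx) / sf) ^ ((n : ℝ) / 4) *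
      Real.exp (-(∑ i, (x i) ^ 2) / (2 * sf)))
    (w : Fin n → ℝ) (hw : ∑ j, (w j) ^ 2 = 1)
    (h : ℝ → ℝ)
    (hh : ∫ x, (h (∑ j, w j * x j)) ^ 2 ∂(gaussMeasure n sx) = 1)
    (ρ : ℝ) (hρ : ρ = 1 + sx ^ 2 / (sf ^ 2 + 2 * sx * sf)) :
    |∫ x, μc x * h (∑ j, w j * x j) ∂(gaussMeasure n sx)| ≤
      ρ ^ (-(n : ℝ) / 4) * (1 + sx / sf) ^ ((1 : ℝ) / 4) := by
  have hρpos : 0 < ρ := by rw [hρ]; positivity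
  have hsfx : (0:ℝ) < sf + sx := by linarith
  have hsf2x : (0:ℝ) < sf + 2 * sx := by linarith
  rcases n with _ | m
  · exfalso; simpa using hw
  have haq : (0:ℝ) < 1/(2*sf) + 1/(2*sx) := by positivity
  have hbq : (0:ℝ) < 1/(2*sx) := by positivity
  have keyh := key m w hw (1/(2*sf) + 1/(2*sx)) haq h
  have keyh2 := key m w hw (1/(2*sx)) hbq (fun u => (h u) ^ 2)
  have hexp : ∀ S : ℝ, Real.exp (-(1/(2*sf) + 1/(2*sx)) * S)
      = Real.exp (-S / (2 * sf)) * Real.exp (-S / (2 * sx)) := by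
    intro S; rw [← Real.exp_add]; congr 1; field_simp; ring
  -- main integral reduction
  have e_main : ∫ x, μc x * h (∑ j, w j * x j) ∂(gaussMeasure (m+1) sx)
      = (((sf + 2 * sx) / sf) ^ (((m+1:ℕ) : ℝ) / 4) * (2 * π * sx) ^ (-((m+1:ℕ) : ℝ) / 2)) *
        (Real.sqrt (π / (1/(2*sf) + 1/(2*sx))) ^ m *
          ∫ u, Real.exp (-(1/(2*sf) + 1/(2*sx)) * u ^ 2) * h u) := by
    rw [gauss_int _ _ hsx, ← keyh, ← integral_const_mul]
    congr 1; funext x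
    rw [hμc x, hexp (∑ i, (x i) ^ 2)]
    ring
  -- hh reduction
  have e_hh0 : ∫ x, (h (∑ j, w j * x j)) ^ 2 ∂(gaussMeasure (m+1) sx)
      = (2 * π * sx) ^ (-((m+1:ℕ) : ℝ) / 2) *
      (Real.sqrt (π / (1/(2*sx))) ^ m *
        ∫ u, Real.exp (-(1/(2*sx)) * u ^ 2) * (h u) ^ 2) := by
    rw [gauss_int _ _ hsx, ← keyh2, ← integral_const_mul]
    congr 1; funext x
    rw [show -(∑ i, (x i) ^ 2) / (2 * sx) = -(1/(2*sx)) * ∑ i, (x i) ^ 2 from by ring]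
    ring
  have e_hh := e_hh0.symm.trans hh
  set M := ∫ u, Real.exp (-(1/(2*sf) + 1/(2*sx)) * u ^ 2) * h u with hM_def
  set J := ∫ u, Real.exp (-(1/(2*sx)) * u ^ 2) * (h u) ^ 2 with hJ_def
  have hRpos : (0:ℝ) < ρ ^ (-((m+1:ℕ) : ℝ) / 4) * (1 + sx / sf) ^ ((1:ℝ)/4) :=
    mul_pos (Real.rpow_pos_of_pos hρpos _) (Real.rpow_pos_of_pos (by positivity) _)
  rw [e_main]
  rcases eq_or_ne M 0 with hM0 | hM0
  · rw [hM0, mul_zero, mul_zero, abs_zero]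
    exact hRpos.le
  have hMint : Integrable (fun u => Real.exp (-(1/(2*sf) + 1/(2*sx)) * u ^ 2) * h u) volume := by
    by_contra hc
    exact hM0 (by rw [hM_def]; exact integral_undef hc)
  have hmeas_h : AEStronglyMeasurable h volume := by
    have hcont : Continuous fun u : ℝ => Real.exp ((1/(2*sf) + 1/(2*sx)) * u ^ 2) :=
      Real.continuous_exp.comp (continuous_const.mul (continuous_pow 2))
    have h2 := (hcont.aestronglyMeasurable).mul hMint.aestronglyMeasurable
    refine h2.congr (Filter.Eventually.of_forall fun u => ?_)
    simp only [Pi.mul_apply, Function.comp_apply]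
    rw [← mul_assoc, ← Real.exp_add,
      show (1/(2*sf) + 1/(2*sx)) * u ^ 2 + -(1/(2*sf) + 1/(2*sx)) * u ^ 2 = 0 from by ring,
      Real.exp_zero, one_mul]
  have hJne : J ≠ 0 := by
    intro h0; rw [h0, mul_zero, mul_zero] at e_hh; exact zero_ne_one e_hh
  have hJint : Integrable (fun u => Real.exp (-(1/(2*sx)) * u ^ 2) * (h u) ^ 2) volume := by
    by_contra hc; exact hJne (by rw [hJ_def]; exact integral_undef hc)
  have hJval : J = ((2 * π * sx) ^ (-((m+1:ℕ) : ℝ) / 2) * Real.sqrt (π / (1/(2*sx))) ^ m)⁻¹ := by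
    refine eq_inv_of_mul_eq_one_left ?_
    linear_combination e_hh
  have hc1 : (0:ℝ) < 1/(2*sf) + 1/(4*sx) := by positivity
  have hmf : MemLp (fun u : ℝ => Real.exp (-(1/(2*sf) + 1/(4*sx)) * u ^ 2)) 2 volume := by
    have haesm : AEStronglyMeasurable (fun u : ℝ =>
        Real.exp (-(1/(2*sf) + 1/(4*sx)) * u ^ 2)) volume :=
      (show Continuous fun u : ℝ => Real.exp (-(1/(2*sf) + 1/(4*sx)) * u ^ 2) from
        Real.continuous_exp.comp (continuous_const.mul (continuous_pow 2))).aestronglyMeasurable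
    rw [memLp_two_iff_integrable_sq haesm]
    rw [show (fun u : ℝ => (Real.exp (-(1/(2*sf) + 1/(4*sx)) * u ^ 2)) ^ 2)
        = fun u => Real.exp (-(2 * (1/(2*sf) + 1/(4*sx))) * u ^ 2) from
      funext fun u => by rw [sq, ← Real.exp_add]; congr 1; ring]
    exact integrable_exp_neg_mul_sq (by positivity)
  have hmg : MemLp (fun u : ℝ => Real.exp (-(1/(4*sx)) * u ^ 2) * h u) 2 volume := by
    have haesm : AEStronglyMeasurable (fun u : ℝ =>
        Real.exp (-(1/(4*sx)) * u ^ 2)) volume :=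
      (show Continuous fun u : ℝ => Real.exp (-(1/(4*sx)) * u ^ 2) from
        Real.continuous_exp.comp (continuous_const.mul (continuous_pow 2))).aestronglyMeasurable
    refine (memLp_two_iff_integrable_sq ?_).mpr ?_
    · exact haesm.mul hmeas_h
    rw [show (fun u : ℝ => (Real.exp (-(1/(4*sx)) * u ^ 2) * h u) ^ 2)
        = fun u => Real.exp (-(1/(2*sx)) * u ^ 2) * (h u) ^ 2 from
      funext fun u => by
        rw [mul_pow]; congr 1; rw [sq, ← Real.exp_add]; congr 1; ring]
    exact hJint
  have hcs := cs _ _ hmf hmg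
  have hMfg : M = ∫ u, (Real.exp (-(1/(2*sf) + 1/(4*sx)) * u ^ 2)) *
      (Real.exp (-(1/(4*sx)) * u ^ 2) * h u) := by
    rw [hM_def]; congr 1; funext u
    rw [← mul_assoc, ← Real.exp_add,
      show -(1/(2*sf) + 1/(4*sx)) * u ^ 2 + -(1/(4*sx)) * u ^ 2
        = -(1/(2*sf) + 1/(2*sx)) * u ^ 2 from by ring]
  have hIf : ∫ u, (Real.exp (-(1/(2*sf) + 1/(4*sx)) * u ^ 2)) ^ 2
      = Real.sqrt (π / (2 * (1/(2*sf) + 1/(4*sx)))) := by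
    rw [show (fun u : ℝ => (Real.exp (-(1/(2*sf) + 1/(4*sx)) * u ^ 2)) ^ 2)
        = fun u => Real.exp (-(2 * (1/(2*sf) + 1/(4*sx))) * u ^ 2) from
      funext fun u => by rw [sq, ← Real.exp_add]; congr 1; ring]
    exact integral_gaussian _
  have hIg : ∫ u, (Real.exp (-(1/(4*sx)) * u ^ 2) * h u) ^ 2 = J := by
    rw [hJ_def]; congr 1; funext u
    rw [mul_pow]; congr 1; rw [sq, ← Real.exp_add]; congr 1; ring
  rw [← hMfg, hIf, hIg] at hcs
  -- arithmetic simplifications of the gaussian constants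
  have hsfne := hsf.ne'
  have hsxne := hsx.ne'
  have hfxne := hsfx.ne'
  have hf2xne := hsf2x.ne'
  have hπ : (0:ℝ) < π := Real.pi_pos
  have r1 : π / (1/(2*sf) + 1/(2*sx)) = 2*π*sf*sx/(sf+sx) := by
    field_simp; ring
  have r2 : π / (2 * (1/(2*sf) + 1/(4*sx))) = 2*π*sf*sx/(sf+2*sx) := by
    field_simp; ring
  have r3 : π / (1/(2*sx)) = 2*π*sx := by
    field_simp
  rw [r3] at hJval
  have hsq2 : Real.sqrt (2*π*sx) ^ m = (2*π*sx) ^ ((m:ℝ)/2) := by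
    rw [Real.sqrt_eq_rpow, ← Real.rpow_natCast ((2*π*sx) ^ ((1:ℝ)/2)) m,
      ← Real.rpow_mul (by positivity)]
    congr 1; ring
  rw [hsq2] at hJval
  have hcomb : (2*π*sx) ^ (-((m+1:ℕ) : ℝ)/2) * (2*π*sx) ^ ((m:ℝ)/2)
      = (2*π*sx) ^ (-((1:ℝ)/2)) := by
    rw [← Real.rpow_add (by positivity)]
    congr 1; push_cast; ring
  rw [show -((m+1:ℕ) : ℝ) / 2 = -((m+1:ℕ) : ℝ)/2 from rfl, hcomb] at hJval
  rw [Real.rpow_neg (by positivity), inv_inv] at hJval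
  have hJhalf : J ^ ((1:ℝ)/2) = (2*π*sx) ^ ((1:ℝ)/4) := by
    rw [hJval, ← Real.rpow_mul (by positivity)]
    norm_num
  have hf2 : (Real.sqrt (π / (2 * (1/(2*sf) + 1/(4*sx))))) ^ ((1:ℝ)/2)
      = (2*π*sf*sx/(sf+2*sx)) ^ ((1:ℝ)/4) := by
    rw [r2, Real.sqrt_eq_rpow, ← Real.rpow_mul (by positivity)]
    norm_num
  rw [hf2, hJhalf] at hcs
  -- positivity of the constant factors
  have hCpos : (0:ℝ) < ((sf + 2 * sx) / sf) ^ (((m+1:ℕ) : ℝ) / 4) :=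
    Real.rpow_pos_of_pos (by positivity) _
  have hKpos : (0:ℝ) < (2 * π * sx) ^ (-((m+1:ℕ) : ℝ) / 2) :=
    Real.rpow_pos_of_pos (by positivity) _
  have hSapos : (0:ℝ) < Real.sqrt (π / (1/(2*sf) + 1/(2*sx))) ^ m := by positivity
  -- final chain
  have hfin := final m sf sx ρ hsf hsx hρ
  rw [show ((m:ℝ)+1) = ((m+1:ℕ) : ℝ) from by push_cast; ring] at hfin
  rw [show (1 + sx / sf) = (sf+sx)/sf from by field_simp]
  calc |((sf + 2 * sx) / sf) ^ (((m+1:ℕ) : ℝ) / 4) * (2 * π * sx) ^ (-((m+1:ℕ) : ℝ) / 2) *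
        (Real.sqrt (π / (1/(2*sf) + 1/(2*sx))) ^ m * M)|
      = ((sf + 2 * sx) / sf) ^ (((m+1:ℕ) : ℝ) / 4) * (2 * π * sx) ^ (-((m+1:ℕ) : ℝ) / 2) *
        Real.sqrt (π / (1/(2*sf) + 1/(2*sx))) ^ m * |M| := by
        rw [abs_mul, abs_of_pos (mul_pos hCpos hKpos), abs_mul, abs_of_pos hSapos]
        ring
    _ ≤ ((sf + 2 * sx) / sf) ^ (((m+1:ℕ) : ℝ) / 4) * (2 * π * sx) ^ (-((m+1:ℕ) : ℝ) / 2) *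
        Real.sqrt (π / (1/(2*sf) + 1/(2*sx))) ^ m *
        ((2*π*sf*sx/(sf+2*sx)) ^ ((1:ℝ)/4) * (2*π*sx) ^ ((1:ℝ)/4)) := by
        exact mul_le_mul_of_nonneg_left hcs (by positivity)
    _ = ((sf + 2 * sx) / sf) ^ (((m+1:ℕ) : ℝ) / 4) * (2 * π * sx) ^ (-((m+1:ℕ) : ℝ) / 2) *
        Real.sqrt (2*π*sf*sx/(sf+sx)) ^ m *
        (2*π*sf*sx/(sf+2*sx)) ^ ((1:ℝ)/4) * (2*π*sx) ^ ((1:ℝ)/4) := by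
        rw [r1]; ring
    _ ≤ ρ ^ (-((m+1:ℕ) : ℝ) / 4) * ((sf+sx)/sf) ^ ((1:ℝ)/4) := hfin
end

section
/- Let s_f, s_x > 0, set α = (s_f + 2s_x)/s_f, and define μ_c(x) = α^{n/4}·exp(−‖x‖²/(2s_f)) for x ∈ ℝⁿ. Let w₁,…,w_{n₁} be i.i.d. N(0, I_n) random vectors in ℝⁿ, independent of x ~ N(0, s_x·I_n), and define f_w(x) = (α^{n/4}/n₁)·Σ_{i=1}^{n₁} cos(⟨w_i, x⟩/√s_f). Then E_w[E_x[(f_w(x) − μ_c(x))²]] = (α^{n/2}/(2n₁))·(1 + (s_f/(s_f + 4s_x))^{n/2} − 2·(s_f/(s_f + 2s_x))^{n/2}), and this quantity is strictly less than α^{n/2}/n₁. -/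
open MeasureTheory

/-- The joint distribution of `n₁` i.i.d. standard Gaussian vectors `w₁,…,w_{n₁} ~ N(0, Iₙ)`,
given as a density with respect to Lebesgue measure on `(ℝⁿ)^{n₁}`. -/
noncomputable def gaussWMeasure (n₁ n : ℕ) : Measure (Fin n₁ → Fin n → ℝ) :=
  MeasureTheory.volume.withDensity fun W =>
    ENNReal.ofReal ((2 * Real.pi) ^ (-((n₁ * n : ℕ) : ℝ) / 2) *
      Real.exp (-(∑ i, ∑ j, (W i j) ^ 2) / 2))

noncomputable def d1 (s y : ℝ) : ℝ :=
  (2 * Real.pi * s) ^ (-(1:ℝ)/2) * Real.exp (-(y^2) / (2*s))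

lemma d1_nonneg {s : ℝ} (hs : 0 < s) (y : ℝ) : 0 ≤ d1 s y := by
  unfold d1; positivity

lemma integrable_d1 {s : ℝ} (hs : 0 < s) : Integrable (d1 s) := by
  have h : d1 s = fun y => (2 * Real.pi * s) ^ (-(1:ℝ)/2) * Real.exp (-(1/(2*s)) * y^2) := by
    funext y; unfold d1; congr 1; congr 1; field_simp
  rw [h]
  exact (integrable_exp_neg_mul_sq (by positivity)).const_mul _

lemma integrable_d1_cexp {s : ℝ} (hs : 0 < s) (t : ℝ) :
    Integrable (fun y : ℝ => (d1 s y : ℂ) * Complex.exp (Complex.I * t * y)) := by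
  have h : (fun y : ℝ => (d1 s y : ℂ) * Complex.exp (Complex.I * t * y)) =
      fun y : ℝ => ((2 * Real.pi * s) ^ (-(1:ℝ)/2) : ℝ) *
        Complex.exp (-(1/(2*s) : ℂ) * (y:ℂ)^2 + (Complex.I * t) * y + 0) := by
    funext y
    rw [show (d1 s y : ℂ) = ((2 * Real.pi * s) ^ (-(1:ℝ)/2) : ℝ) *
        Complex.exp ((-(y^2) / (2*s) : ℝ) : ℂ) by
      unfold d1; push_cast [Complex.ofReal_exp]; ring]
    rw [mul_assoc, ← Complex.exp_add]
    congr 2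
    push_cast
    field_simp
    ring
  rw [h]
  have hb : (0:ℝ) < (1/(2*s) : ℂ).re := by
    simp; positivity
  exact (integrable_cexp_quadratic hb (Complex.I * t) 0).const_mul _

lemma L1 {s : ℝ} (hs : 0 < s) (t : ℝ) :
    ∫ y : ℝ, (d1 s y : ℂ) * Complex.exp (Complex.I * t * y)
      = (Real.exp (-(s * t^2)/2) : ℝ) := by
  have h : (fun y : ℝ => (d1 s y : ℂ) * Complex.exp (Complex.I * t * y)) =
      fun y : ℝ => ((2 * Real.pi * s) ^ (-(1:ℝ)/2) : ℝ) *
        Complex.exp ((-(1/(2*s)) : ℂ) * (y:ℂ)^2 + (Complex.I * t) * y + 0) := by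
    funext y
    rw [show (d1 s y : ℂ) = ((2 * Real.pi * s) ^ (-(1:ℝ)/2) : ℝ) *
        Complex.exp ((-(y^2) / (2*s) : ℝ) : ℂ) by
      unfold d1; push_cast [Complex.ofReal_exp]; ring]
    rw [mul_assoc, ← Complex.exp_add]
    congr 2
    push_cast
    field_simp
    ring
  rw [h, MeasureTheory.integral_const_mul, integral_cexp_quadratic (by simp; positivity) _ _]
  have h1 : (Real.pi : ℂ) / -(-(1/(2*s)) : ℂ) = ((2 * Real.pi * s : ℝ) : ℂ) := by
    push_cast; field_simp
  have h2 : (0:ℂ) - (Complex.I * t)^2 / (4 * (-(1/(2*s)) : ℂ)) = ((-(s * t^2)/2 : ℝ) : ℂ) := by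
    push_cast
    have : ((s:ℂ)) ≠ 0 := by exact_mod_cast hs.ne'
    field_simp
    ring_nf
    simp [Complex.I_sq]
  rw [h1, h2]
  rw [show ((2 * Real.pi * s : ℝ) : ℂ) ^ ((1:ℂ)/2) = ((2 * Real.pi * s) ^ ((1:ℝ)/2) : ℝ) by
    rw [Complex.ofReal_cpow (by positivity)]; norm_num]
  rw [← Complex.ofReal_exp, ← Complex.ofReal_mul, ← Complex.ofReal_mul,
    Complex.ofReal_inj, ← mul_assoc, ← Real.rpow_add (by positivity)]
  norm_num

lemma L2 {ι : Type*} [Fintype ι] {s : ℝ} (hs : 0 < s) (t : ι → ℝ) :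
    ∫ v : ι → ℝ, (∏ i, d1 s (v i)) * Real.cos (∑ i, t i * v i)
      = Real.exp (-(s * ∑ i, (t i)^2)/2) := by
  have hint : ∀ i : ι, Integrable fun y : ℝ =>
      (d1 s y : ℂ) * Complex.exp (Complex.I * t i * y) := fun i => integrable_d1_cexp hs (t i)
  have hF : Integrable fun v : ι → ℝ =>
      ∏ i, ((d1 s (v i) : ℂ) * Complex.exp (Complex.I * t i * (v i))) :=
    Integrable.fintype_prod (𝕜 := ℂ) hint
  have hC : (∫ v : ι → ℝ, ∏ i, ((d1 s (v i) : ℂ) * Complex.exp (Complex.I * t i * (v i))))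
      = ((Real.exp (-(s * ∑ i, (t i)^2)/2) : ℝ) : ℂ) := by
    rw [MeasureTheory.integral_fintype_prod_volume_eq_prod
      (f := fun i (y : ℝ) => (d1 s y : ℂ) * Complex.exp (Complex.I * t i * y))]
    have : ∀ i : ι, (∫ y : ℝ, (d1 s y : ℂ) * Complex.exp (Complex.I * t i * y))
        = ((Real.exp (-(s * (t i)^2)/2) : ℝ) : ℂ) := fun i => L1 hs (t i)
    simp_rw [this, ← Complex.ofReal_prod, ← Real.exp_sum]
    congr 2
    rw [← Finset.sum_div]
    congr 1
    simp [Finset.mul_sum]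
  have hre : (fun v : ι → ℝ => (∏ i, d1 s (v i)) * Real.cos (∑ i, t i * v i))
      = fun v : ι → ℝ =>
        (∏ i, ((d1 s (v i) : ℂ) * Complex.exp (Complex.I * t i * (v i)))).re := by
    funext v
    rw [Finset.prod_mul_distrib, ← Complex.ofReal_prod]
    have h1 : ∀ i : ι, Complex.exp (Complex.I * t i * (v i))
        = Complex.exp (((t i * v i : ℝ) : ℂ) * Complex.I) := by
      intro i; congr 1; push_cast; ring
    simp_rw [h1, ← Complex.exp_sum, ← Finset.sum_mul, ← Complex.ofReal_sum,
      Complex.re_ofReal_mul, Complex.exp_ofReal_mul_I_re]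
  rw [hre]
  have := integral_re (𝕜 := ℂ) hF
  simp only [RCLike.re_to_complex] at this
  rw [this, hC, Complex.ofReal_re]

lemma neg_half_rpow {x : ℝ} (hx : 0 < x) : x ^ (-(1:ℝ)/2) = (x⁻¹) ^ ((1:ℝ)/2) := by
  rw [neg_div, Real.rpow_neg hx.le, ← Real.inv_rpow hx.le]

lemma L0 {s : ℝ} (hs : 0 < s) {a : ℝ} (ha : 0 ≤ a) :
    ∫ y : ℝ, d1 s y * Real.exp (-(a * y^2)) = (1 + 2*a*s) ^ (-(1:ℝ)/2) := by
  have hb : (0:ℝ) < 1/(2*s) + a := by positivity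
  have h : (fun y : ℝ => d1 s y * Real.exp (-(a * y^2)))
      = fun y : ℝ => (2 * Real.pi * s) ^ (-(1:ℝ)/2) * Real.exp (-(1/(2*s) + a) * y^2) := by
    funext y
    unfold d1
    rw [mul_assoc, ← Real.exp_add]
    congr 2
    field_simp
    ring
  rw [h, MeasureTheory.integral_const_mul, integral_gaussian]
  rw [Real.sqrt_eq_rpow, neg_half_rpow (by positivity), neg_half_rpow (by positivity),
    ← Real.mul_rpow (by positivity) (by positivity)]
  congr 1
  field_simp

lemma int_d1 {s : ℝ} (hs : 0 < s) : ∫ y : ℝ, d1 s y = 1 := by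
  have := L0 hs (le_refl 0)
  simp only [zero_mul, neg_zero, Real.exp_zero, mul_one, mul_zero] at this
  rw [this]
  norm_num

lemma L0pi {ι : Type*} [Fintype ι] {s : ℝ} (hs : 0 < s) {a : ℝ} (ha : 0 ≤ a) :
    ∫ v : ι → ℝ, (∏ i, d1 s (v i)) * Real.exp (-(a * ∑ i, (v i)^2))
      = ((1 + 2*a*s) ^ (-(1:ℝ)/2)) ^ (Fintype.card ι) := by
  have h : (fun v : ι → ℝ => (∏ i, d1 s (v i)) * Real.exp (-(a * ∑ i, (v i)^2)))
      = fun v : ι → ℝ => ∏ i, (d1 s (v i) * Real.exp (-(a * (v i)^2))) := by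
    funext v
    rw [Finset.prod_mul_distrib, ← Real.exp_sum]
    congr 2
    simp [Finset.mul_sum]
  rw [h, MeasureTheory.integral_fintype_prod_volume_eq_pow (ι := ι) (f := fun y => d1 s y * Real.exp (-(a * y^2))),
    L0 hs ha]

lemma int_d1pi {ι : Type*} [Fintype ι] {s : ℝ} (hs : 0 < s) :
    ∫ v : ι → ℝ, ∏ i, d1 s (v i) = 1 := by
  rw [MeasureTheory.integral_fintype_prod_volume_eq_pow (ι := ι) (f := fun y => d1 s y), int_d1 hs, one_pow]

lemma integrable_d1pi {ι : Type*} [Fintype ι] {s : ℝ} (hs : 0 < s) :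
    Integrable (fun v : ι → ℝ => ∏ i, d1 s (v i)) :=
  Integrable.fintype_prod (𝕜 := ℝ) (fun _ => integrable_d1 hs)

lemma prod_d1 {ι : Type*} [Fintype ι] {s : ℝ} (hs : 0 < s) (x : ι → ℝ) :
    (2 * Real.pi * s) ^ (-(Fintype.card ι : ℝ)/2) * Real.exp (-(∑ i, (x i)^2)/(2*s))
      = ∏ i, d1 s (x i) := by
  unfold d1
  rw [Finset.prod_mul_distrib, Finset.prod_const, Finset.card_univ, ← Real.exp_sum]
  congr 1
  · rw [← Real.rpow_natCast ((2*Real.pi*s) ^ (-(1:ℝ)/2)) (Fintype.card ι),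
      ← Real.rpow_mul (by positivity)]
    congr 1
    ring
  · congr 1
    rw [← Finset.sum_div]
    congr 1
    simp

lemma cont_co {n : ℕ} (t : Fin n → ℝ) :
    Continuous (fun v : Fin n → ℝ => Real.cos (∑ j, t j * v j)) := by
  apply Real.continuous_cos.comp
  exact continuous_finset_sum _ fun j _ => (continuous_const.mul (continuous_apply j))

lemma integrable_r_mul {ι : Type*} [Fintype ι] {s : ℝ} (hs : 0 < s) {φ : (ι → ℝ) → ℝ}
    (hφ : Continuous φ) {C : ℝ} (hC : ∀ v, |φ v| ≤ C) :
    Integrable (fun v : ι → ℝ => (∏ j, d1 s (v j)) * φ v) := by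
  have := Integrable.bdd_mul (f := φ) (g := fun v : ι → ℝ => ∏ j, d1 s (v j))
    (c := C) (integrable_d1pi hs) hφ.aestronglyMeasurable (Filter.Eventually.of_forall fun v => by
      simpa [Real.norm_eq_abs] using hC v)
  simpa [mul_comm] using this

lemma Wint {n₁ n : ℕ} (t : Fin n → ℝ) (c m : ℝ) :
    ∫ W : Fin n₁ → Fin n → ℝ,
      (∏ i, ∏ j, d1 1 (W i j)) * (c/(n₁:ℝ) * (∑ i, Real.cos (∑ j, t j * W i j)) - m)^2
    = (c/(n₁:ℝ))^2 * ((n₁:ℝ)^2 * Real.exp (-(∑ j, (t j)^2))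
        + (n₁:ℝ) * ((1/2 + Real.exp (-(2 * ∑ j, (t j)^2))/2) - Real.exp (-(∑ j, (t j)^2))))
      - 2*(c/(n₁:ℝ))*m*((n₁:ℝ) * Real.exp (-(∑ j, (t j)^2)/2)) + m^2 := by
  set Q : ℝ := ∑ j, (t j)^2 with hQ
  set r : (Fin n → ℝ) → ℝ := fun v => ∏ j, d1 1 (v j) with hr
  set co : (Fin n → ℝ) → ℝ := fun v => Real.cos (∑ j, t j * v j) with hco
  have hrint : Integrable r := integrable_d1pi one_pos
  have hco_cont : Continuous co := cont_co t
  have hco_bdd : ∀ v, |co v| ≤ 1 := fun v => Real.abs_cos_le_one _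
  -- single-block integrals
  have hr0 : ∫ v, r v = 1 := int_d1pi one_pos
  have hr1 : ∫ v, r v * co v = Real.exp (-Q/2) := by
    have := L2 (s := 1) one_pos t
    rw [hQ, hco, hr]
    rw [this]  -- exp (-(1*Q)/2)
    norm_num
  have hr2 : ∫ v, r v * (co v * co v) = 1/2 + Real.exp (-(2*Q))/2 := by
    have hpt : (fun v => r v * (co v * co v))
        = fun v => r v * (1/2) + (r v * Real.cos (∑ j, (2 * t j) * v j)) / 2 := by
      funext v
      rw [hco]
      simp only [← sq]
      rw [Real.cos_sq]
      have : (2 * ∑ j, t j * v j) = ∑ j, (2 * t j) * v j := by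
        rw [Finset.mul_sum]; congr 1; funext j; ring
      rw [this]
      ring
    rw [hpt, MeasureTheory.integral_add]
    · have h2 : ∫ v : Fin n → ℝ, (r v * Real.cos (∑ j, (2 * t j) * v j)) / 2
          = (∫ v : Fin n → ℝ, r v * Real.cos (∑ j, (2 * t j) * v j)) / 2 :=
        integral_div 2 _
      rw [h2, L2 (s := 1) one_pos (fun j => 2 * t j)]
      have h3 : ∫ v, r v * (1/2) = (1:ℝ)/2 := by
        rw [MeasureTheory.integral_mul_const, hr0, one_mul]
      rw [h3]
      have h4 : (∑ j, (2 * t j)^2) = 4 * Q := by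
        rw [hQ, Finset.mul_sum]; congr 1; funext j; ring
      rw [h4]
      norm_num
      congr 2
      ring
    · exact (integrable_r_mul one_pos continuous_const (C := 1/2) (fun v => le_of_eq (abs_of_nonneg (by norm_num))) : Integrable fun v : Fin n → ℝ => (∏ j, d1 1 (v j)) * (1/2))
    · exact ((integrable_r_mul one_pos (Real.continuous_cos.comp (continuous_finset_sum _ fun j _ =>
        (continuous_const.mul (continuous_apply j)))) (fun v => Real.abs_cos_le_one _)).div_const 2)
  -- W-level
  have hρ : Integrable (fun W : Fin n₁ → Fin n → ℝ => ∏ i, r (W i)) :=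
    Integrable.fintype_prod (𝕜 := ℝ) (fun _ => hrint)
  have hbddW : ∀ {φ : (Fin n₁ → Fin n → ℝ) → ℝ}, Continuous φ → ∀ {C : ℝ}, (∀ v, |φ v| ≤ C) →
      Integrable (fun W => (∏ i, r (W i)) * φ W) := by
    intro φ hφ C hC
    have := Integrable.bdd_mul (f := φ) (c := C) hρ hφ.aestronglyMeasurable
      (Filter.Eventually.of_forall fun v => by simpa [Real.norm_eq_abs] using hC v)
    simpa [mul_comm] using this
  have hcoW_cont : ∀ i : Fin n₁, Continuous (fun W : Fin n₁ → Fin n → ℝ => co (W i)) :=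
    fun i => hco_cont.comp (continuous_apply i)
  have hsingle : ∀ i : Fin n₁, ∫ W : Fin n₁ → Fin n → ℝ, (∏ i', r (W i')) * co (W i)
      = Real.exp (-Q/2) := by
    intro i
    have hpt : (fun W : Fin n₁ → Fin n → ℝ => (∏ i', r (W i')) * co (W i))
        = fun W => ∏ i', (fun v => r v * (if i' = i then co v else 1)) (W i') := by
      funext W
      simp only []
      rw [Finset.prod_mul_distrib]
      simp [Finset.prod_ite_eq']
    rw [hpt, MeasureTheory.integral_fintype_prod_volume_eq_prod
      (f := fun i' (v : Fin n → ℝ) => r v * (if i' = i then co v else 1))]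
    have heach : ∀ i' : Fin n₁, (∫ v : Fin n → ℝ, r v * (if i' = i then co v else 1))
        = if i' = i then Real.exp (-Q/2) else 1 := by
      intro i'
      by_cases h : i' = i <;> simp [h, hr1, hr0]
    simp_rw [heach]
    simp [Finset.prod_ite_eq']
  have hpair : ∀ i k : Fin n₁,
      (∫ W : Fin n₁ → Fin n → ℝ, (∏ i', r (W i')) * (co (W i) * co (W k)))
      = if i = k then (1/2 + Real.exp (-(2*Q))/2) else Real.exp (-Q/2) * Real.exp (-Q/2) := by
    intro i k
    have hpt : (fun W : Fin n₁ → Fin n → ℝ => (∏ i', r (W i')) * (co (W i) * co (W k)))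
        = fun W => ∏ i', (fun v => r v *
            ((if i' = i then co v else 1) * (if i' = k then co v else 1))) (W i') := by
      funext W
      simp only []
      rw [Finset.prod_mul_distrib, Finset.prod_mul_distrib]
      simp [Finset.prod_ite_eq']
    rw [hpt, MeasureTheory.integral_fintype_prod_volume_eq_prod
      (f := fun i' (v : Fin n → ℝ) => r v *
        ((if i' = i then co v else 1) * (if i' = k then co v else 1)))]
    by_cases hik : i = k
    · subst hik
      have heach : ∀ i' : Fin n₁,
          (∫ v : Fin n → ℝ, r v * ((if i' = i then co v else 1) * (if i' = i then co v else 1)))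
          = if i' = i then (1/2 + Real.exp (-(2*Q))/2) else 1 := by
        intro i'
        by_cases h : i' = i <;> simp [h, hr2, hr0]
      simp_rw [heach]
      simp [Finset.prod_ite_eq']
    · have heach : ∀ i' : Fin n₁,
          (∫ v : Fin n → ℝ, r v * ((if i' = i then co v else 1) * (if i' = k then co v else 1)))
          = (if i' = i then Real.exp (-Q/2) else 1) * (if i' = k then Real.exp (-Q/2) else 1) := by
        intro i'
        by_cases h1 : i' = i
        · have h2 : i' ≠ k := by rw [h1]; exact hik
          simp [h1, h2, hik, hr1]
        · by_cases h2 : i' = k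
          · simp [h1, h2, (show ¬ k = i from fun hh => hik hh.symm), hr1]
          · simp [h1, h2, hr0]
      simp_rw [heach]
      rw [Finset.prod_mul_distrib]
      simp [Finset.prod_ite_eq', hik]
  -- expansion
  have hexp : (fun W : Fin n₁ → Fin n → ℝ =>
        (∏ i, ∏ j, d1 1 (W i j)) * (c/(n₁:ℝ) * (∑ i, Real.cos (∑ j, t j * W i j)) - m)^2)
      = fun W => ((c/(n₁:ℝ))^2 * ((∏ i, r (W i)) * ((∑ i, co (W i)) * (∑ i, co (W i))))
        - 2*(c/(n₁:ℝ))*m * ((∏ i, r (W i)) * (∑ i, co (W i)))) + m^2 * (∏ i, r (W i)) := by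
    funext W
    simp only [hr, hco]
    ring
  have hSbdd : ∀ W : Fin n₁ → Fin n → ℝ, |∑ i, co (W i)| ≤ (n₁:ℝ) := by
    intro W
    calc |∑ i, co (W i)| ≤ ∑ i, |co (W i)| := Finset.abs_sum_le_sum_abs _ _
    _ ≤ ∑ _i : Fin n₁, (1:ℝ) := Finset.sum_le_sum (fun i _ => hco_bdd _)
    _ = (n₁:ℝ) := by simp
  have hS_cont : Continuous (fun W : Fin n₁ → Fin n → ℝ => ∑ i, co (W i)) :=
    continuous_finset_sum _ fun i _ => hcoW_cont i
  have hIS : Integrable (fun W : Fin n₁ → Fin n → ℝ => (∏ i, r (W i)) * (∑ i, co (W i))) :=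
    hbddW hS_cont hSbdd
  have hISS : Integrable (fun W : Fin n₁ → Fin n → ℝ =>
      (∏ i, r (W i)) * ((∑ i, co (W i)) * (∑ i, co (W i)))) := by
    refine hbddW (hS_cont.mul hS_cont) (C := (n₁:ℝ) * n₁) (fun W => ?_)
    rw [abs_mul]
    exact mul_le_mul (hSbdd W) (hSbdd W) (abs_nonneg _) (Nat.cast_nonneg _)
  rw [hexp, MeasureTheory.integral_add (by exact (hISS.const_mul _).sub (hIS.const_mul _))
      (hρ.const_mul _),
    MeasureTheory.integral_sub (hISS.const_mul _) (hIS.const_mul _),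
    MeasureTheory.integral_const_mul, MeasureTheory.integral_const_mul,
    MeasureTheory.integral_const_mul]
  have hintρ : ∫ W : Fin n₁ → Fin n → ℝ, ∏ i, r (W i) = 1 := by
    rw [MeasureTheory.integral_fintype_prod_volume_eq_prod (f := fun _ (v : Fin n → ℝ) => r v)]
    simp [hr0]
  have hintS : ∫ W : Fin n₁ → Fin n → ℝ, (∏ i, r (W i)) * (∑ i, co (W i))
      = (n₁:ℝ) * Real.exp (-Q/2) := by
    have hpt : (fun W : Fin n₁ → Fin n → ℝ => (∏ i, r (W i)) * (∑ i, co (W i)))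
        = fun W => ∑ i, (∏ i', r (W i')) * co (W i) := by
      funext W; rw [Finset.mul_sum]
    rw [hpt, MeasureTheory.integral_finset_sum _
      (fun i _ => hbddW (hcoW_cont i) (fun W => hco_bdd _))]
    simp_rw [hsingle]
    simp [mul_comm]
  have hintSS : ∫ W : Fin n₁ → Fin n → ℝ, (∏ i, r (W i)) * ((∑ i, co (W i)) * (∑ i, co (W i)))
      = (n₁:ℝ)^2 * Real.exp (-Q) + (n₁:ℝ) * ((1/2 + Real.exp (-(2*Q))/2) - Real.exp (-Q)) := by
    have hpt : (fun W : Fin n₁ → Fin n → ℝ => (∏ i, r (W i)) * ((∑ i, co (W i)) * (∑ i, co (W i))))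
        = fun W => ∑ i, ∑ k, (∏ i', r (W i')) * (co (W i) * co (W k)) := by
      funext W
      rw [Finset.sum_mul_sum, Finset.mul_sum]
      congr 1
      funext i
      rw [Finset.mul_sum]
    rw [hpt, MeasureTheory.integral_finset_sum _ (fun i _ => integrable_finset_sum _
      (fun k _ => hbddW (φ := fun W => co (W i) * co (W k)) ((hcoW_cont i).mul (hcoW_cont k)) (C := 1) (fun W => by
        rw [abs_mul]
        simpa using mul_le_mul (hco_bdd (W i)) (hco_bdd (W k)) (abs_nonneg _) zero_le_one)))]
    have hswap : ∀ i : Fin n₁, (∫ W : Fin n₁ → Fin n → ℝ,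
        ∑ k, (∏ i', r (W i')) * (co (W i) * co (W k)))
        = ∑ k, if i = k then (1/2 + Real.exp (-(2*Q))/2)
            else Real.exp (-Q/2) * Real.exp (-Q/2) := by
      intro i
      rw [MeasureTheory.integral_finset_sum _ (fun k _ =>
        hbddW (φ := fun W => co (W i) * co (W k)) ((hcoW_cont i).mul (hcoW_cont k)) (C := 1) (fun W => by
          rw [abs_mul]
          simpa using mul_le_mul (hco_bdd (W i)) (hco_bdd (W k)) (abs_nonneg _) zero_le_one))]
      simp_rw [hpair]
    simp_rw [hswap]
    have hEE : Real.exp (-Q/2) * Real.exp (-Q/2) = Real.exp (-Q) := by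
      rw [← Real.exp_add]; congr 1; ring
    have hterm : ∀ i k : Fin n₁, (if i = k then (1/2 + Real.exp (-(2*Q))/2)
        else Real.exp (-Q/2) * Real.exp (-Q/2))
        = Real.exp (-Q) + (if i = k then (1/2 + Real.exp (-(2*Q))/2) - Real.exp (-Q) else 0) := by
      intro i k
      split <;> simp [hEE]
    simp_rw [hterm, Finset.sum_add_distrib, Finset.sum_ite_eq, Finset.sum_const,
      Finset.card_univ, Fintype.card_fin]
    simp
    ring
  rw [hintρ, hintS, hintSS]
  ring

lemma cont_d1pi {ι : Type*} [Fintype ι] {s : ℝ} :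
    Continuous (fun v : ι → ℝ => ∏ i, d1 s (v i)) := by
  apply continuous_finset_prod
  intro i _
  unfold d1
  fun_prop

lemma prod_d1W {n₁ n : ℕ} (W : Fin n₁ → Fin n → ℝ) :
    (2 * Real.pi) ^ (-((n₁ * n : ℕ) : ℝ)/2) * Real.exp (-(∑ i, ∑ j, (W i j)^2)/2)
      = ∏ i, ∏ j, d1 1 (W i j) := by
  have h1 : ∀ i : Fin n₁, (2 * Real.pi) ^ (-(n : ℝ)/2) * Real.exp (-(∑ j, (W i j)^2)/2)
      = ∏ j, d1 1 (W i j) := by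
    intro i
    have := prod_d1 (s := 1) one_pos (W i)
    simpa [Fintype.card_fin] using this
  simp_rw [← h1]
  rw [Finset.prod_mul_distrib, Finset.prod_const, Finset.card_univ, Fintype.card_fin,
    ← Real.exp_sum]
  congr 1
  · rw [← Real.rpow_natCast ((2*Real.pi) ^ (-(n:ℝ)/2)) n₁, ← Real.rpow_mul (by positivity)]
    congr 1
    push_cast
    ring
  · congr 1
    rw [← Finset.sum_div]
    congr 1
    simp

lemma gaussMeasure_integral {n : ℕ} {s : ℝ} (hs : 0 < s) (g : (Fin n → ℝ) → ℝ) :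
    ∫ x, g x ∂(gaussMeasure n s) = ∫ x, (∏ i, d1 s (x i)) * g x := by
  rw [gaussMeasure]
  have hmeas : Measurable fun x : Fin n → ℝ =>
      Real.toNNReal ((2 * Real.pi * s) ^ (-(n:ℝ)/2) * Real.exp (-(∑ i, (x i)^2)/(2*s))) := by
    apply Measurable.real_toNNReal
    fun_prop
  rw [show (fun x : Fin n → ℝ => ENNReal.ofReal ((2 * Real.pi * s) ^ (-(n:ℝ)/2) *
        Real.exp (-(∑ i, (x i)^2)/(2*s))))
      = fun x => ((Real.toNNReal ((2 * Real.pi * s) ^ (-(n:ℝ)/2) *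
        Real.exp (-(∑ i, (x i)^2)/(2*s))) : NNReal) : ENNReal) from rfl]
  rw [integral_withDensity_eq_integral_smul hmeas g]
  congr 1
  funext x
  rw [NNReal.smul_def, Real.coe_toNNReal _ (by positivity), smul_eq_mul]
  congr 1
  have := prod_d1 hs x
  simpa [Fintype.card_fin] using this

lemma gaussWMeasure_integral {n₁ n : ℕ} (g : (Fin n₁ → Fin n → ℝ) → ℝ) :
    ∫ W, g W ∂(gaussWMeasure n₁ n) = ∫ W, (∏ i, ∏ j, d1 1 (W i j)) * g W := by
  rw [gaussWMeasure]
  have hmeas : Measurable fun W : Fin n₁ → Fin n → ℝ =>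
      Real.toNNReal ((2 * Real.pi) ^ (-((n₁ * n : ℕ) : ℝ)/2) *
        Real.exp (-(∑ i, ∑ j, (W i j)^2)/2)) := by
    apply Measurable.real_toNNReal
    fun_prop
  rw [show (fun W : Fin n₁ → Fin n → ℝ => ENNReal.ofReal ((2 * Real.pi) ^ (-((n₁ * n : ℕ) : ℝ)/2) *
        Real.exp (-(∑ i, ∑ j, (W i j)^2)/2)))
      = fun W => ((Real.toNNReal ((2 * Real.pi) ^ (-((n₁ * n : ℕ) : ℝ)/2) *
        Real.exp (-(∑ i, ∑ j, (W i j)^2)/2)) : NNReal) : ENNReal) from rfl]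
  rw [integral_withDensity_eq_integral_smul hmeas g]
  congr 1
  funext W
  rw [NNReal.smul_def, Real.coe_toNNReal _ (by positivity), smul_eq_mul]
  congr 1
  exact prod_d1W W

lemma pow_neg_half {x : ℝ} (hx : 0 < x) (n : ℕ) :
    (x ^ (-(1:ℝ)/2))^n = (x⁻¹) ^ ((n:ℝ)/2) := by
  rw [neg_half_rpow hx, ← Real.rpow_natCast ((x⁻¹) ^ ((1:ℝ)/2)) n,
    ← Real.rpow_mul (inv_nonneg.2 hx.le)]
  congr 1
  ring

lemma main_swap {n₁ n : ℕ} {c sf sx : ℝ} (hsf : 0 < sf) (hsx : 0 < sx) (hc0 : 0 < c) :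
    ∫ W : Fin n₁ → Fin n → ℝ, (∏ i, ∏ j, d1 1 (W i j)) *
        (∫ x : Fin n → ℝ, (∏ i, d1 sx (x i)) *
          (c/(n₁:ℝ) * (∑ i, Real.cos (∑ j, (x j / Real.sqrt sf) * W i j))
            - c * Real.exp (-(∑ i, (x i)^2)/(2*sf)))^2)
    = ∫ x : Fin n → ℝ, (∏ i, d1 sx (x i)) *
        (∫ W : Fin n₁ → Fin n → ℝ, (∏ i, ∏ j, d1 1 (W i j)) *
          (c/(n₁:ℝ) * (∑ i, Real.cos (∑ j, (x j / Real.sqrt sf) * W i j))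
            - c * Real.exp (-(∑ i, (x i)^2)/(2*sf)))^2) := by
  have hρWint : Integrable (fun W : Fin n₁ → Fin n → ℝ => ∏ i, ∏ j, d1 1 (W i j)) := by
    have := Integrable.fintype_prod (𝕜 := ℝ)
      (f := fun (_ : Fin n₁) (v : Fin n → ℝ) => ∏ j, d1 1 (v j))
      (fun _ => integrable_d1pi one_pos)
    exact this
  have hρxint : Integrable (fun x : Fin n → ℝ => ∏ i, d1 sx (x i)) := integrable_d1pi hsx
  set g : (Fin n₁ → Fin n → ℝ) → (Fin n → ℝ) → ℝ := fun W x =>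
    (c/(n₁:ℝ) * (∑ i, Real.cos (∑ j, (x j / Real.sqrt sf) * W i j))
      - c * Real.exp (-(∑ i, (x i)^2)/(2*sf)))^2 with hgdef
  have hgcont : Continuous (fun p : (Fin n₁ → Fin n → ℝ) × (Fin n → ℝ) => g p.1 p.2) := by
    rw [hgdef]
    apply Continuous.pow
    apply Continuous.sub
    · apply Continuous.mul continuous_const
      apply continuous_finset_sum
      intro i _
      apply Real.continuous_cos.comp
      apply continuous_finset_sum
      intro j _
      exact (((continuous_apply j).comp continuous_snd).div_const _).mul
        ((continuous_apply j).comp ((continuous_apply i).comp continuous_fst))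
    · apply Continuous.mul continuous_const
      apply Real.continuous_exp.comp
      apply Continuous.div_const
      apply Continuous.neg
      apply continuous_finset_sum
      intro i _
      exact ((continuous_apply i).comp continuous_snd).pow 2
  have hgbdd : ∀ (W : Fin n₁ → Fin n → ℝ) (x : Fin n → ℝ), |g W x| ≤ 4*c^2 := by
    intro W x
    have h1 : |c/(n₁:ℝ) * (∑ i, Real.cos (∑ j, (x j / Real.sqrt sf) * W i j))| ≤ c := by
      rw [abs_mul]
      have hs : |∑ i, Real.cos (∑ j, (x j / Real.sqrt sf) * W i j)| ≤ (n₁:ℝ) := by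
        calc |∑ i, Real.cos (∑ j, (x j / Real.sqrt sf) * W i j)|
            ≤ ∑ i, |Real.cos (∑ j, (x j / Real.sqrt sf) * W i j)| :=
              Finset.abs_sum_le_sum_abs _ _
        _ ≤ ∑ _i : Fin n₁, (1:ℝ) := Finset.sum_le_sum (fun i _ => Real.abs_cos_le_one _)
        _ = (n₁:ℝ) := by simp
      rcases Nat.eq_zero_or_pos n₁ with h0 | hpos
      · subst h0; simp [hc0.le]
      · have hn₁' : (0:ℝ) < (n₁:ℝ) := by exact_mod_cast hpos
        calc |c/(n₁:ℝ)| * |∑ i, Real.cos (∑ j, (x j / Real.sqrt sf) * W i j)|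
            ≤ (c/(n₁:ℝ)) * (n₁:ℝ) := by
              rw [abs_of_pos (by positivity)]
              exact mul_le_mul_of_nonneg_left hs (by positivity)
        _ = c := by field_simp
    have h2 : |c * Real.exp (-(∑ i, (x i)^2)/(2*sf))| ≤ c := by
      rw [abs_mul, abs_of_pos hc0, abs_of_pos (Real.exp_pos _)]
      apply mul_le_of_le_one_right hc0.le
      rw [Real.exp_le_one_iff]
      have : (0:ℝ) ≤ ∑ i, (x i)^2 := Finset.sum_nonneg (fun i _ => sq_nonneg _)
      apply div_nonpos_of_nonpos_of_nonneg <;> [linarith; positivity]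
    rw [hgdef, abs_of_nonneg (sq_nonneg _)]
    have ha := abs_le.mp h1
    have hb := abs_le.mp h2
    nlinarith [ha.1, ha.2, hb.1, hb.2]
  have hFint : Integrable (fun p : (Fin n₁ → Fin n → ℝ) × (Fin n → ℝ) =>
      (∏ i, ∏ j, d1 1 (p.1 i j)) * ((∏ i, d1 sx (p.2 i)) * g p.1 p.2))
      (MeasureTheory.volume.prod MeasureTheory.volume) := by
    have hb : Integrable (fun p : (Fin n₁ → Fin n → ℝ) × (Fin n → ℝ) =>
        ((∏ i, ∏ j, d1 1 (p.1 i j)) * (∏ i, d1 sx (p.2 i))) * (4*c^2))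
        (MeasureTheory.volume.prod MeasureTheory.volume) :=
      (hρWint.mul_prod hρxint).mul_const _
    refine Integrable.mono' hb ?_ (Filter.Eventually.of_forall (fun p => ?_))
    · have hcW : Continuous (fun p : (Fin n₁ → Fin n → ℝ) × (Fin n → ℝ) =>
          ∏ i, ∏ j, d1 1 (p.1 i j)) := by
        apply continuous_finset_prod
        intro i _
        have : Continuous (fun v : Fin n → ℝ => ∏ j, d1 1 (v j)) := cont_d1pi
        exact this.comp ((continuous_apply i).comp continuous_fst)
      have hcx : Continuous (fun p : (Fin n₁ → Fin n → ℝ) × (Fin n → ℝ) =>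
          ∏ i, d1 sx (p.2 i)) := by
        have : Continuous (fun v : Fin n → ℝ => ∏ i, d1 sx (v i)) := cont_d1pi
        exact this.comp continuous_snd
      exact (hcW.mul (hcx.mul hgcont)).aestronglyMeasurable
    · have hW0 : 0 ≤ ∏ i, ∏ j, d1 1 (p.1 i j) :=
        Finset.prod_nonneg (fun i _ => Finset.prod_nonneg (fun j _ => d1_nonneg one_pos _))
      have hx0 : 0 ≤ ∏ i, d1 sx (p.2 i) := Finset.prod_nonneg (fun i _ => d1_nonneg hsx _)
      rw [Real.norm_eq_abs, abs_mul, abs_mul, abs_of_nonneg hW0, abs_of_nonneg hx0]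
      calc (∏ i, ∏ j, d1 1 (p.1 i j)) * ((∏ i, d1 sx (p.2 i)) * |g p.1 p.2|)
          ≤ (∏ i, ∏ j, d1 1 (p.1 i j)) * ((∏ i, d1 sx (p.2 i)) * (4*c^2)) := by
            apply mul_le_mul_of_nonneg_left _ hW0
            exact mul_le_mul_of_nonneg_left (hgbdd p.1 p.2) hx0
      _ = ((∏ i, ∏ j, d1 1 (p.1 i j)) * (∏ i, d1 sx (p.2 i))) * (4*c^2) := by ring
  simp_rw [← MeasureTheory.integral_const_mul]
  rw [MeasureTheory.integral_integral_swap hFint]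
  congr 1
  funext x
  congr 1
  funext W
  ring

/-- Mean-squared error of the random-feature network: for i.i.d. weights `wᵢ ~ N(0, Iₙ)`
independent of `x ~ N(0, s_x·Iₙ)`, the network
`f_w(x) = (α^{n/4}/n₁)·Σᵢ cos(⟨wᵢ,x⟩/√s_f)` with `α = (s_f+2s_x)/s_f` satisfies
`E_w[E_x[(f_w(x) − μ_c(x))²]] = (α^{n/2}/(2n₁))·(1 + (s_f/(s_f+4s_x))^{n/2} −
2(s_f/(s_f+2s_x))^{n/2})`, and this quantity is strictly less than `α^{n/2}/n₁`. -/
theorem stmt15 (n n₁ : ℕ) (hn₁ : 0 < n₁)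
    (sf sx α : ℝ) (hsf : 0 < sf) (hsx : 0 < sx)
    (hα : α = (sf + 2 * sx) / sf)
    (μc : (Fin n → ℝ) → ℝ)
    (hμc : ∀ x, μc x = α ^ ((n : ℝ) / 4) *
      Real.exp (-(∑ i, (x i) ^ 2) / (2 * sf)))
    (fw : (Fin n₁ → Fin n → ℝ) → (Fin n → ℝ) → ℝ)
    (hfw : ∀ W x, fw W x = α ^ ((n : ℝ) / 4) / n₁ *
      ∑ i, Real.cos ((∑ j, W i j * x j) / Real.sqrt sf)) :
    (∫ W, (∫ x, (fw W x - μc x) ^ 2 ∂(gaussMeasure n sx)) ∂(gaussWMeasure n₁ n) =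
      α ^ ((n : ℝ) / 2) / (2 * n₁) *
        (1 + (sf / (sf + 4 * sx)) ^ ((n : ℝ) / 2) -
          2 * (sf / (sf + 2 * sx)) ^ ((n : ℝ) / 2))) ∧
    α ^ ((n : ℝ) / 2) / (2 * n₁) *
        (1 + (sf / (sf + 4 * sx)) ^ ((n : ℝ) / 2) -
          2 * (sf / (sf + 2 * sx)) ^ ((n : ℝ) / 2)) <
      α ^ ((n : ℝ) / 2) / n₁ := by
  have hα0 : 0 < α := by rw [hα]; positivity
  have hn₁' : (0:ℝ) < (n₁:ℝ) := by exact_mod_cast hn₁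
  set c : ℝ := α ^ ((n:ℝ)/4) with hc
  have hc0 : 0 < c := Real.rpow_pos_of_pos hα0 _
  have hc2 : c^2 = α ^ ((n:ℝ)/2) := by
    rw [hc, ← Real.rpow_natCast (α ^ ((n:ℝ)/4)) 2, ← Real.rpow_mul hα0.le]
    congr 1
    push_cast
    ring
  have hA0 : 0 < α ^ ((n:ℝ)/2) := Real.rpow_pos_of_pos hα0 _
  have hsf4 : (0:ℝ) < sf + 4*sx := by positivity
  have hsf2 : (0:ℝ) < sf + 2*sx := by positivity
  constructor
  · -- the equality
    -- normalize the integrand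
    have hg : ∀ (W : Fin n₁ → Fin n → ℝ) (x : Fin n → ℝ), (fw W x - μc x)^2 =
        (c/(n₁:ℝ) * (∑ i, Real.cos (∑ j, (x j / Real.sqrt sf) * W i j))
          - c * Real.exp (-(∑ i, (x i)^2)/(2*sf)))^2 := by
      intro W x
      rw [hfw, hμc]
      congr 2
      rw [show (∑ i, Real.cos ((∑ j, W i j * x j)/Real.sqrt sf))
          = ∑ i, Real.cos (∑ j, (x j / Real.sqrt sf) * W i j) from
        Finset.sum_congr rfl (fun i _ => by
          congr 1
          rw [Finset.sum_div]
          exact Finset.sum_congr rfl (fun j _ => by ring))]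
    rw [gaussWMeasure_integral]
    have hinner : ∀ W : Fin n₁ → Fin n → ℝ,
        (∫ x, (fw W x - μc x)^2 ∂(gaussMeasure n sx)) = ∫ x : Fin n → ℝ,
          (∏ i, d1 sx (x i)) * (c/(n₁:ℝ) * (∑ i, Real.cos (∑ j, (x j / Real.sqrt sf) * W i j))
            - c * Real.exp (-(∑ i, (x i)^2)/(2*sf)))^2 := by
      intro W
      rw [gaussMeasure_integral hsx]
      congr 1
      funext x
      rw [hg W x]
    simp_rw [hinner]
    rw [main_swap hsf hsx hc0]
    -- inner W-integral via Wint
    have hWint : ∀ x : Fin n → ℝ,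
        (∫ W : Fin n₁ → Fin n → ℝ, (∏ i, ∏ j, d1 1 (W i j)) *
          (c/(n₁:ℝ) * (∑ i, Real.cos (∑ j, (x j / Real.sqrt sf) * W i j))
            - c * Real.exp (-(∑ i, (x i)^2)/(2*sf)))^2)
        = c^2/(2*(n₁:ℝ)) + c^2/(2*(n₁:ℝ)) * Real.exp (-(2/sf * ∑ i, (x i)^2))
          - c^2/(n₁:ℝ) * Real.exp (-(1/sf * ∑ i, (x i)^2)) := by
      intro x
      have hW := Wint (n₁ := n₁) (fun j => x j / Real.sqrt sf) c
        (c * Real.exp (-(∑ i, (x i)^2)/(2*sf)))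
      rw [hW]
      have hQ : (∑ j, (x j / Real.sqrt sf)^2) = (∑ j, (x j)^2)/sf := by
        rw [Finset.sum_div]
        exact Finset.sum_congr rfl (fun j _ => by
          rw [div_pow, Real.sq_sqrt hsf.le])
      rw [hQ]
      set q : ℝ := ∑ j, (x j)^2 with hq
      set E : ℝ := Real.exp (-(q/sf)/2) with hE
      have e1 : Real.exp (-(q/sf)) = E^2 := by
        rw [hE, ← Real.exp_nat_mul]; congr 1; push_cast; ring
      have e2 : Real.exp (-(2*(q/sf))) = E^4 := by
        rw [hE, ← Real.exp_nat_mul]; congr 1; push_cast; ring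
      have e3 : Real.exp (-(q)/(2*sf)) = E := by
        rw [hE]; congr 1; ring
      have e4 : Real.exp (-(2/sf * q)) = E^4 := by
        rw [hE, ← Real.exp_nat_mul]; congr 1; push_cast; ring
      have e5 : Real.exp (-(1/sf * q)) = E^2 := by
        rw [hE, ← Real.exp_nat_mul]; congr 1; push_cast; ring
      rw [e1, e2, e3, e4, e5]
      field_simp
      ring
    simp_rw [hWint]
    -- split the x-integral
    have hsum0 : ∀ x : Fin n → ℝ, (0:ℝ) ≤ ∑ i, (x i)^2 :=
      fun x => Finset.sum_nonneg (fun i _ => sq_nonneg _)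
    have hintexp : ∀ a : ℝ, 0 ≤ a → Integrable (fun x : Fin n → ℝ =>
        (∏ i, d1 sx (x i)) * Real.exp (-(a * ∑ i, (x i)^2))) := by
      intro a ha
      apply integrable_r_mul hsx
      · apply Real.continuous_exp.comp
        apply Continuous.neg
        apply Continuous.mul continuous_const
        apply continuous_finset_sum
        intro i _
        exact (continuous_apply i).pow 2
      · intro v
        rw [abs_of_pos (Real.exp_pos _), Real.exp_le_one_iff]
        simp only [neg_nonpos]
        exact mul_nonneg ha (hsum0 v)
    have hexpand : (fun x : Fin n → ℝ => (∏ i, d1 sx (x i)) *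
        (c^2/(2*(n₁:ℝ)) + c^2/(2*(n₁:ℝ)) * Real.exp (-(2/sf * ∑ i, (x i)^2))
          - c^2/(n₁:ℝ) * Real.exp (-(1/sf * ∑ i, (x i)^2))))
        = fun x : Fin n → ℝ =>
          (c^2/(2*(n₁:ℝ)) * (∏ i, d1 sx (x i))
            + c^2/(2*(n₁:ℝ)) * ((∏ i, d1 sx (x i)) * Real.exp (-(2/sf * ∑ i, (x i)^2))))
          - c^2/(n₁:ℝ) * ((∏ i, d1 sx (x i)) * Real.exp (-(1/sf * ∑ i, (x i)^2))) := by
      funext x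
      ring
    have hIa : Integrable (fun x : Fin n → ℝ =>
        c^2/(2*(n₁:ℝ)) * (∏ i, d1 sx (x i))) := (integrable_d1pi hsx).const_mul _
    have hIb : Integrable (fun x : Fin n → ℝ => c^2/(2*(n₁:ℝ)) *
        ((∏ i, d1 sx (x i)) * Real.exp (-(2/sf * ∑ i, (x i)^2)))) :=
      (hintexp (2/sf) (by positivity)).const_mul _
    have hIc : Integrable (fun x : Fin n → ℝ => c^2/((n₁:ℝ)) *
        ((∏ i, d1 sx (x i)) * Real.exp (-(1/sf * ∑ i, (x i)^2)))) :=
      (hintexp (1/sf) (by positivity)).const_mul _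
    have hIab : Integrable (fun x : Fin n → ℝ =>
        c^2/(2*(n₁:ℝ)) * (∏ i, d1 sx (x i)) + c^2/(2*(n₁:ℝ)) *
          ((∏ i, d1 sx (x i)) * Real.exp (-(2/sf * ∑ i, (x i)^2)))) := hIa.add hIb
    rw [hexpand, MeasureTheory.integral_sub hIab hIc]
    rw [MeasureTheory.integral_add hIa hIb,
      MeasureTheory.integral_const_mul, MeasureTheory.integral_const_mul,
      MeasureTheory.integral_const_mul]
    have hv0 : ∫ x : Fin n → ℝ, ∏ i, d1 sx (x i) = 1 := int_d1pi hsx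
    have hv : ∀ a : ℝ, 0 ≤ a → (∫ x : Fin n → ℝ,
        (∏ i, d1 sx (x i)) * Real.exp (-(a * ∑ i, (x i)^2)))
        = ((1 + 2*a*sx) ^ (-(1:ℝ)/2))^n := by
      intro a ha
      simpa [Fintype.card_fin] using L0pi (ι := Fin n) hsx ha
    rw [hv0, hv (2/sf) (by positivity), hv (1/sf) (by positivity)]
    have hb1 : (1 + 2*(2/sf)*sx) = (sf + 4*sx)/sf := by
      rw [add_div, div_self hsf.ne']; ring
    have hb2 : (1 + 2*(1/sf)*sx) = (sf + 2*sx)/sf := by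
      rw [add_div, div_self hsf.ne']; ring
    rw [hb1, hb2, pow_neg_half (by positivity) n, pow_neg_half (by positivity) n,
      inv_div, inv_div, hc2]
    ring
  · -- the inequality
    have hβ : (sf/(sf+4*sx)) ^ ((n:ℝ)/2) ≤ 1 := by
      apply Real.rpow_le_one (by positivity)
      · rw [div_le_one hsf4]; linarith
      · positivity
    have hγ : 0 < (sf/(sf+2*sx)) ^ ((n:ℝ)/2) := Real.rpow_pos_of_pos (by positivity) _
    have hstep : 1 + (sf/(sf+4*sx)) ^ ((n:ℝ)/2) - 2*(sf/(sf+2*sx)) ^ ((n:ℝ)/2) < 2 := by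
      linarith
    calc α ^ ((n:ℝ)/2) / (2*(n₁:ℝ)) *
          (1 + (sf/(sf+4*sx)) ^ ((n:ℝ)/2) - 2*(sf/(sf+2*sx)) ^ ((n:ℝ)/2))
        < α ^ ((n:ℝ)/2) / (2*(n₁:ℝ)) * 2 :=
          mul_lt_mul_of_pos_left hstep (by positivity)
    _ = α ^ ((n:ℝ)/2) / (n₁:ℝ) := by field_simp
end

section
/- Let s_f, s_x > 0, set α = (s_f + 2s_x)/s_f, and define μ_c(x) = α^{n/4}·exp(−‖x‖²/(2s_f)) for x ∈ ℝⁿ. Let x ~ N(0, s_x·I_n). Given ε > 0, assume n₁ > (1/ε)·α^{n/2}. Then there exist weight vectors w₁,…,w_{n₁} ∈ ℝⁿ such that the single-hidden-layer network f(x) = Σ_{i=1}^{n₁} a_i·cos(⟨w_i, x⟩/√s_f) with a_i = α^{n/4}/n₁ for all i satisfies E_x[(f(x) − μ_c(x))²] ≤ ε. -/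
open MeasureTheory

open scoped NNReal ENNReal

set_option linter.unusedVariables false


noncomputable def gpdf (s u : ℝ) : ℝ :=
  (2 * Real.pi * s) ^ (-(1:ℝ)/2) * Real.exp (-u ^ 2 / (2 * s))

lemma gpdf_nonneg {s : ℝ} (hs : 0 < s) (u : ℝ) : 0 ≤ gpdf s u := by
  unfold gpdf; positivity

lemma gpdf_meas (s : ℝ) : Measurable (gpdf s) := by
  unfold gpdf; fun_prop

lemma integrable_gpdf {s : ℝ} (hs : 0 < s) : Integrable (gpdf s) := by
  unfold gpdf
  have e : ∀ u : ℝ, -u ^ 2 / (2 * s) = -(1/(2*s)) * u ^ 2 := fun u => by ring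
  simp_rw [e]
  exact (integrable_exp_neg_mul_sq (by positivity)).const_mul _

lemma integral_gpdf {s : ℝ} (hs : 0 < s) : ∫ u, gpdf s u = 1 := by
  unfold gpdf
  have e : ∀ u : ℝ, -u ^ 2 / (2 * s) = -(1/(2*s)) * u ^ 2 := fun u => by ring
  simp_rw [e, integral_const_mul, integral_gaussian]
  have h1 : Real.pi / (1/(2*s)) = 2 * Real.pi * s := by field_simp
  rw [h1, neg_div, Real.rpow_neg (by positivity), ← Real.sqrt_eq_rpow]
  rw [inv_mul_cancel₀ (by positivity)]

lemma cfourier (b : ℝ) :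
    ∫ u : ℝ, Complex.exp (Complex.I * b * u) * (gpdf 1 u : ℂ)
      = (Real.exp (-b ^ 2 / 2) : ℂ) := by
  have h2π : (0:ℝ) < 2 * Real.pi := by positivity
  unfold gpdf
  have e : ∀ u : ℝ, Complex.exp (Complex.I * b * u) *
      (((2 * Real.pi * 1) ^ (-(1:ℝ)/2) * Real.exp (-u ^ 2 / (2 * 1)) : ℝ) : ℂ)
      = (((2 * Real.pi) ^ (-(1:ℝ)/2) : ℝ) : ℂ) •
        (Complex.exp (Complex.I * b * u) * Complex.exp (-(1/2 : ℂ) * u ^ 2)) := by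
    intro u
    rw [mul_one, Complex.ofReal_mul, Complex.ofReal_exp]
    rw [show ((-u ^ 2 / (2 * 1) : ℝ) : ℂ) = -(1/2 : ℂ) * (u : ℂ) ^ 2 by push_cast; ring]
    rw [smul_eq_mul]; ring
  simp_rw [e, integral_smul]
  rw [fourierIntegral_gaussian (by norm_num : (0:ℝ) < (1/2 : ℂ).re) (b : ℂ)]
  have h1 : ((Real.pi : ℂ) / (1/2)) = ((2 * Real.pi : ℝ) : ℂ) := by push_cast; ring
  have h2 : (((2 * Real.pi) ^ (-(1:ℝ)/2) : ℝ) : ℂ) = ((2 * Real.pi : ℝ) : ℂ) ^ (-(1/2) : ℂ) := by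
    rw [Complex.ofReal_cpow h2π.le]; norm_num
  rw [h1, h2, smul_eq_mul, ← mul_assoc, ← Complex.cpow_add _ _ (by
    simpa using h2π.ne')]
  norm_num [show -(b:ℂ)^2/(4 * (1/2)) = ((-b^2/2 : ℝ) : ℂ) by push_cast; ring, Complex.ofReal_exp]

noncomputable def stdρ (n : ℕ) : (Fin n → ℝ) → ℝ := fun w => ∏ j, gpdf 1 (w j)

lemma stdρ_nonneg {n : ℕ} (w : Fin n → ℝ) : 0 ≤ stdρ n w :=
  Finset.prod_nonneg fun j _ => gpdf_nonneg one_pos _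

lemma stdρ_meas (n : ℕ) : Measurable (stdρ n) :=
  Finset.measurable_prod _ fun j _ => (gpdf_meas 1).comp (measurable_pi_apply j)

lemma integrable_stdρ (n : ℕ) : Integrable (stdρ n) :=
  Integrable.fintype_prod (𝕜 := ℝ) fun _ => integrable_gpdf one_pos

lemma integral_stdρ (n : ℕ) : ∫ w, stdρ n w = 1 := by
  rw [show (fun w : Fin n → ℝ => stdρ n w) = fun w => ∏ j, gpdf 1 (w j) from rfl,
    integral_fintype_prod_volume_eq_prod (f := fun _ : Fin n => gpdf 1)]
  simp [integral_gpdf one_pos]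

noncomputable def Gv {n : ℕ} (b : Fin n → ℝ) : ℝ := ∏ j, Real.exp (-(b j) ^ 2 / 2)

noncomputable def hfun {n : ℕ} (b : Fin n → ℝ) : (Fin n → ℝ) → ℝ :=
  fun w => Real.cos (∑ j, b j * w j) - Gv b

lemma Gv_pos {n : ℕ} (b : Fin n → ℝ) : 0 < Gv b :=
  Finset.prod_pos fun j _ => Real.exp_pos _

lemma Gv_le_one {n : ℕ} (b : Fin n → ℝ) : Gv b ≤ 1 :=
  Finset.prod_le_one (fun j _ => (Real.exp_pos _).le)
    (fun j _ => Real.exp_le_one_iff.mpr (by nlinarith [sq_nonneg (b j)]))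

lemma hfun_abs_le {n : ℕ} (b : Fin n → ℝ) (w : Fin n → ℝ) : |hfun b w| ≤ 2 := by
  have h1 := Real.neg_one_le_cos (∑ j, b j * w j)
  have h2 := Real.cos_le_one (∑ j, b j * w j)
  have := Gv_pos b; have := Gv_le_one b
  rw [abs_le]; constructor <;> simp [hfun] <;> linarith

lemma hfun_meas {n : ℕ} (b : Fin n → ℝ) : Measurable (hfun b) := by
  unfold hfun; fun_prop

lemma re_cexp_mul (r c : ℝ) : (Complex.exp (Complex.I * r) * (c : ℂ)).re = Real.cos r * c := by
  rw [mul_comm Complex.I (r:ℂ), Complex.exp_mul_I]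
  simp [add_mul, Complex.cos_ofReal_re]

lemma integral_cos_stdρ {n : ℕ} (b : Fin n → ℝ) :
    ∫ w : Fin n → ℝ, Real.cos (∑ j, b j * w j) * stdρ n w = Gv b := by
  have hint : Integrable
      (fun w : Fin n → ℝ => Complex.exp (Complex.I * (∑ j, b j * w j)) * (stdρ n w : ℂ)) := by
    apply Integrable.bdd_mul (c := 1) ((integrable_stdρ n).ofReal)
    · apply Measurable.aestronglyMeasurable
      apply Complex.measurable_exp.comp
      fun_prop
    · refine Filter.Eventually.of_forall fun w => ?_
      rw [Complex.norm_exp]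
      simp
  have key : ∫ w : Fin n → ℝ, Complex.exp (Complex.I * (∑ j, b j * w j)) * (stdρ n w : ℂ)
      = ((Gv b : ℝ) : ℂ) := by
    have e : ∀ w : Fin n → ℝ,
        Complex.exp (Complex.I * (∑ j, b j * w j)) * (stdρ n w : ℂ)
        = ∏ j, (Complex.exp (Complex.I * (b j) * (w j)) * (gpdf 1 (w j) : ℂ)) := by
      intro w
      rw [Finset.prod_mul_distrib, ← Complex.exp_sum]
      unfold stdρ
      rw [Complex.ofReal_prod]
      congr 1
      push_cast
      rw [Finset.mul_sum]
      congr 1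
      exact Finset.sum_congr rfl fun j _ => by ring
    simp_rw [e]
    rw [integral_fintype_prod_volume_eq_prod (𝕜 := ℂ)
      (f := fun j (u : ℝ) => Complex.exp (Complex.I * (b j) * u) * (gpdf 1 u : ℂ))]
    simp_rw [cfourier]
    rw [Gv, Complex.ofReal_prod]
  have hre := integral_re hint
  rw [key] at hre
  simp only [RCLike.re_to_complex, Complex.ofReal_re] at hre
  rw [← hre]
  congr 1
  ext w
  rw [← re_cexp_mul (∑ j, b j * w j) (stdρ n w)]

lemma integrable_h_stdρ {n : ℕ} (b : Fin n → ℝ) :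
    Integrable (fun w => hfun b w * stdρ n w) :=
  (integrable_stdρ n).bdd_mul (c := 2) (hfun_meas b).aestronglyMeasurable
    (Filter.Eventually.of_forall fun w => by rw [Real.norm_eq_abs]; exact hfun_abs_le b w)

lemma integrable_cos_stdρ {n : ℕ} (b : Fin n → ℝ) :
    Integrable (fun w => Real.cos (∑ j, b j * w j) * stdρ n w) :=
  (integrable_stdρ n).bdd_mul (c := 1)
    (Real.measurable_cos.comp (by fun_prop) |>.aestronglyMeasurable)
    (Filter.Eventually.of_forall fun w => by rw [Real.norm_eq_abs]; exact Real.abs_cos_le_one _)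

lemma integrable_cossq_stdρ {n : ℕ} (b : Fin n → ℝ) :
    Integrable (fun w => Real.cos (∑ j, b j * w j) ^ 2 * stdρ n w) :=
  (integrable_stdρ n).bdd_mul (c := 1)
    ((Real.measurable_cos.comp (by fun_prop) |>.pow_const 2).aestronglyMeasurable)
    (Filter.Eventually.of_forall fun w => by
      rw [Real.norm_eq_abs, abs_of_nonneg (sq_nonneg _)]
      exact Real.cos_sq_le_one _)

lemma integrable_hsq_stdρ {n : ℕ} (b : Fin n → ℝ) :
    Integrable (fun w => hfun b w ^ 2 * stdρ n w) :=
  (integrable_stdρ n).bdd_mul (c := 4) ((hfun_meas b).pow_const 2).aestronglyMeasurable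
    (Filter.Eventually.of_forall fun w => by
      rw [Real.norm_eq_abs, abs_of_nonneg (sq_nonneg _)]
      nlinarith [hfun_abs_le b w, abs_nonneg (hfun b w), sq_abs (hfun b w)])

lemma integral_h_stdρ {n : ℕ} (b : Fin n → ℝ) :
    ∫ w, hfun b w * stdρ n w = 0 := by
  have e : ∀ w : Fin n → ℝ, hfun b w * stdρ n w
      = Real.cos (∑ j, b j * w j) * stdρ n w - Gv b * stdρ n w := fun w => by
    unfold hfun; ring
  simp_rw [e]
  rw [integral_sub (integrable_cos_stdρ b) ((integrable_stdρ n).const_mul _),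
    integral_cos_stdρ, integral_const_mul, integral_stdρ]
  ring

lemma integral_hsq_stdρ_le {n : ℕ} (b : Fin n → ℝ) :
    ∫ w, hfun b w ^ 2 * stdρ n w ≤ 1 := by
  have e : ∀ w : Fin n → ℝ, hfun b w ^ 2 * stdρ n w
      = Real.cos (∑ j, b j * w j) ^ 2 * stdρ n w - Gv b ^ 2 * stdρ n w
        - 2 * Gv b * (hfun b w * stdρ n w) := fun w => by
    unfold hfun; ring
  simp_rw [e]
  have h1 : Integrable (fun w : Fin n → ℝ =>
      Real.cos (∑ j, b j * w j) ^ 2 * stdρ n w - Gv b ^ 2 * stdρ n w) :=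
    (integrable_cossq_stdρ b).sub ((integrable_stdρ n).const_mul _)
  rw [integral_sub h1 ((integrable_h_stdρ b).const_mul _),
    integral_sub (integrable_cossq_stdρ b) ((integrable_stdρ n).const_mul _),
    integral_const_mul, integral_const_mul, integral_h_stdρ, integral_stdρ]
  have hcos : ∫ w, Real.cos (∑ j, b j * w j) ^ 2 * stdρ n w ≤ 1 := by
    rw [← integral_stdρ n]
    apply integral_mono (integrable_cossq_stdρ b) (integrable_stdρ n)
    intro w
    exact mul_le_of_le_one_left (stdρ_nonneg w) (Real.cos_sq_le_one _)
  nlinarith [Gv_pos b]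

noncomputable def ρW (n n₁ : ℕ) : (Fin n₁ → Fin n → ℝ) → ℝ := fun W => ∏ i, stdρ n (W i)

lemma ρW_nonneg {n n₁ : ℕ} (W : Fin n₁ → Fin n → ℝ) : 0 ≤ ρW n n₁ W :=
  Finset.prod_nonneg fun i _ => stdρ_nonneg _

lemma ρW_meas (n n₁ : ℕ) : Measurable (ρW n n₁) :=
  Finset.measurable_prod _ fun i _ => (stdρ_meas n).comp (measurable_pi_apply i)

lemma integrable_ρW (n n₁ : ℕ) : Integrable (ρW n n₁) :=
  Integrable.fintype_prod (𝕜 := ℝ) fun _ => integrable_stdρ n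

lemma integral_ρW (n n₁ : ℕ) : ∫ W, ρW n n₁ W = 1 := by
  rw [show (fun W : Fin n₁ → Fin n → ℝ => ρW n n₁ W)
      = fun W => ∏ i, stdρ n (W i) from rfl,
    integral_fintype_prod_volume_eq_prod (𝕜 := ℝ) (f := fun _ : Fin n₁ => stdρ n)]
  simp [integral_stdρ n]

lemma integral_offdiag {n n₁ : ℕ} (b : Fin n → ℝ) {i j : Fin n₁} (hij : i ≠ j) :
    ∫ W : Fin n₁ → Fin n → ℝ, hfun b (W i) * hfun b (W j) * ρW n n₁ W = 0 := by
  have e : ∀ W : Fin n₁ → Fin n → ℝ, hfun b (W i) * hfun b (W j) * ρW n n₁ W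
      = ∏ k, ((if k = i then hfun b (W k) else 1) *
          ((if k = j then hfun b (W k) else 1) * stdρ n (W k))) := by
    intro W
    rw [Finset.prod_mul_distrib, Finset.prod_mul_distrib, Finset.prod_ite_eq',
      Finset.prod_ite_eq']
    simp only [Finset.mem_univ, if_true]
    rw [ρW]; ring
  simp_rw [e]
  rw [integral_fintype_prod_volume_eq_prod (𝕜 := ℝ)
    (f := fun k (w : Fin n → ℝ) => (if k = i then hfun b w else 1) *
      ((if k = j then hfun b w else 1) * stdρ n w))]
  apply Finset.prod_eq_zero (Finset.mem_univ i)
  simp only [if_pos rfl, if_neg hij, one_mul]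
  exact integral_h_stdρ b

lemma integral_diag {n n₁ : ℕ} (b : Fin n → ℝ) (i : Fin n₁) :
    ∫ W : Fin n₁ → Fin n → ℝ, hfun b (W i) ^ 2 * ρW n n₁ W
      = ∫ w, hfun b w ^ 2 * stdρ n w := by
  have e : ∀ W : Fin n₁ → Fin n → ℝ, hfun b (W i) ^ 2 * ρW n n₁ W
      = ∏ k, ((if k = i then hfun b (W k) ^ 2 else 1) * stdρ n (W k)) := by
    intro W
    rw [Finset.prod_mul_distrib, Finset.prod_ite_eq']
    simp only [Finset.mem_univ, if_true]
    rw [ρW]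
  simp_rw [e]
  rw [integral_fintype_prod_volume_eq_prod (𝕜 := ℝ)
    (f := fun k (w : Fin n → ℝ) => (if k = i then hfun b w ^ 2 else 1) * stdρ n w)]
  rw [Finset.prod_eq_single_of_mem i (Finset.mem_univ i)]
  · simp
  · intro k _ hk
    simp only [if_neg hk, one_mul]
    exact integral_stdρ n

lemma gauss_density_prod {n : ℕ} {s : ℝ} (hs : 0 < s) (x : Fin n → ℝ) :
    (2 * Real.pi * s) ^ (-(n : ℝ) / 2) * Real.exp (-(∑ i, (x i) ^ 2) / (2 * s))
      = ∏ j, gpdf s (x j) := by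
  unfold gpdf
  rw [Finset.prod_mul_distrib, Finset.prod_const, Finset.card_univ, Fintype.card_fin]
  congr 1
  · rw [← Real.rpow_natCast ((2 * Real.pi * s) ^ (-(1:ℝ)/2)) n,
      ← Real.rpow_mul (by positivity)]
    congr 1
    ring
  · rw [← Real.exp_sum]
    congr 1
    rw [← Finset.sum_div, ← Finset.sum_neg_distrib]

lemma integral_gaussMeasure {n : ℕ} {s : ℝ} (hs : 0 < s) (φ : (Fin n → ℝ) → ℝ) :
    ∫ x, φ x ∂(gaussMeasure n s) = ∫ x, φ x * ∏ j, gpdf s (x j) := by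
  have hmeas : Measurable (fun x : Fin n → ℝ =>
      Real.toNNReal ((2 * Real.pi * s) ^ (-(n : ℝ) / 2) *
        Real.exp (-(∑ i, (x i) ^ 2) / (2 * s)))) := by
    apply Measurable.real_toNNReal
    apply Measurable.const_mul
    apply Real.measurable_exp.comp
    apply Measurable.div_const
    exact (Finset.measurable_sum _ fun i _ => (measurable_pi_apply i).pow_const 2).neg
  have hmeq : gaussMeasure n s = volume.withDensity (fun x =>
      ((Real.toNNReal ((2 * Real.pi * s) ^ (-(n : ℝ) / 2) *
        Real.exp (-(∑ i, (x i) ^ 2) / (2 * s))) : ℝ≥0) : ℝ≥0∞)) := rfl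
  rw [hmeq, integral_withDensity_eq_integral_smul hmeas φ]
  congr 1
  ext x
  rw [NNReal.smul_def, smul_eq_mul,
    Real.coe_toNNReal _ (by positivity), gauss_density_prod hs]
  ring

/-- Theorem 3 (sufficiency of exponentially many nodes): if `n₁ > (1/ε)·α^{n/2}` with
`α = (s_f+2s_x)/s_f`, then there exist weight vectors `w₁,…,w_{n₁}` such that the
one-hidden-layer network `f(x) = Σᵢ (α^{n/4}/n₁)·cos(⟨wᵢ,x⟩/√s_f)` satisfies
`E_x[(f(x) − μ_c(x))²] ≤ ε` for `x ~ N(0, s_x·Iₙ)`, where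
`μ_c(x) = α^{n/4}·exp(−‖x‖²/(2s_f))`. -/
theorem stmt16 (n n₁ : ℕ) (hn₁ : 0 < n₁)
    (sf sx α ε : ℝ) (hsf : 0 < sf) (hsx : 0 < sx) (hε : 0 < ε)
    (hα : α = (sf + 2 * sx) / sf)
    (μc : (Fin n → ℝ) → ℝ)
    (hμc : ∀ x, μc x = α ^ ((n : ℝ) / 4) *
      Real.exp (-(∑ i, (x i) ^ 2) / (2 * sf)))
    (hbig : (n₁ : ℝ) > (1 / ε) * α ^ ((n : ℝ) / 2)) :
    ∃ w : Fin n₁ → Fin n → ℝ,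
      ∫ x, ((∑ i, (α ^ ((n : ℝ) / 4) / n₁) *
          Real.cos ((∑ j, w i j * x j) / Real.sqrt sf)) - μc x) ^ 2
        ∂(gaussMeasure n sx) ≤ ε := by
  have hα0 : 0 < α := by rw [hα]; positivity
  have hn₁' : (0:ℝ) < n₁ := by exact_mod_cast hn₁
  have hμc' : μc = fun x => α ^ ((n : ℝ) / 4) *
      Real.exp (-(∑ i, (x i) ^ 2) / (2 * sf)) := funext hμc
  subst hμc'
  set c : ℝ := α ^ ((n : ℝ) / 4) with hc
  have hc0 : 0 < c := Real.rpow_pos_of_pos hα0 _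
  set bx : (Fin n → ℝ) → (Fin n → ℝ) := fun x j => x j / Real.sqrt sf with hbx
  -- the squared-error integrand
  set Q : (Fin n₁ → Fin n → ℝ) → (Fin n → ℝ) → ℝ := fun W x =>
    ((∑ i, (c / (n₁:ℝ)) * Real.cos ((∑ j, W i j * x j) / Real.sqrt sf)) -
      c * Real.exp (-(∑ i, (x i) ^ 2) / (2 * sf))) ^ 2 with hQ
  set ρx : (Fin n → ℝ) → ℝ := fun x => ∏ j, gpdf sx (x j) with hρx
  -- basic facts about ρx
  have integrable_ρx : Integrable ρx :=
    Integrable.fintype_prod (𝕜 := ℝ) fun _ => integrable_gpdf hsx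
  have integral_ρx : ∫ x, ρx x = 1 := by
    rw [hρx, integral_fintype_prod_volume_eq_prod (𝕜 := ℝ) (f := fun _ : Fin n => gpdf sx)]
    simp [integral_gpdf hsx]
  have ρx_nonneg : ∀ x, 0 ≤ ρx x := fun x => Finset.prod_nonneg fun j _ => gpdf_nonneg hsx _
  have ρx_meas : Measurable ρx :=
    Finset.measurable_prod _ fun j _ => (gpdf_meas sx).comp (measurable_pi_apply j)
  -- Gaussian identity : Gv (bx x) is the target profile
  have hGv : ∀ x : Fin n → ℝ,
      Gv (bx x) = Real.exp (-(∑ i, (x i) ^ 2) / (2 * sf)) := by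
    intro x
    rw [Gv, ← Real.exp_sum]
    congr 1
    have e : ∀ j : Fin n, -(bx x j) ^ 2 / 2 = -(x j) ^ 2 / (2 * sf) := by
      intro j
      rw [hbx]
      simp only
      rw [div_pow, Real.sq_sqrt hsf.le]
      ring
    rw [Finset.sum_congr rfl fun j _ => e j, ← Finset.sum_div, ← Finset.sum_neg_distrib]
  -- pointwise rewriting of Q
  have hq : ∀ (W : Fin n₁ → Fin n → ℝ) (x : Fin n → ℝ),
      Q W x = (c / (n₁:ℝ)) ^ 2 * (∑ i, hfun (bx x) (W i)) ^ 2 := by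
    intro W x
    rw [hQ]
    simp only
    rw [← hGv x]
    have key : (∑ i : Fin n₁, (c / (n₁:ℝ)) *
        Real.cos ((∑ j, W i j * x j) / Real.sqrt sf)) - c * Gv (bx x)
        = (c / (n₁:ℝ)) * ∑ i, hfun (bx x) (W i) := by
      rw [Finset.mul_sum]
      rw [show c * Gv (bx x) = ∑ _i : Fin n₁, (c / (n₁:ℝ)) * Gv (bx x) by
        rw [Finset.sum_const, Finset.card_univ, Fintype.card_fin, nsmul_eq_mul]
        field_simp]
      rw [← Finset.sum_sub_distrib]
      refine Finset.sum_congr rfl fun i _ => ?_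
      rw [hfun]
      rw [show (∑ j, bx x j * W i j) = (∑ j, W i j * x j) / Real.sqrt sf by
        rw [Finset.sum_div]
        refine Finset.sum_congr rfl fun j _ => ?_
        rw [hbx]; ring]
      ring
    rw [key, mul_pow]
  -- boundedness of Q
  have hq_bdd : ∀ (W : Fin n₁ → Fin n → ℝ) (x : Fin n → ℝ), Q W x ≤ 4 * c ^ 2 := by
    intro W x
    have h1 : |∑ i : Fin n₁, (c / (n₁:ℝ)) *
        Real.cos ((∑ j, W i j * x j) / Real.sqrt sf)| ≤ c := by
      calc |∑ i : Fin n₁, (c / (n₁:ℝ)) * Real.cos ((∑ j, W i j * x j) / Real.sqrt sf)|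
          ≤ ∑ i : Fin n₁, |(c / (n₁:ℝ)) * Real.cos ((∑ j, W i j * x j) / Real.sqrt sf)| :=
            Finset.abs_sum_le_sum_abs _ _
        _ ≤ ∑ _i : Fin n₁, c / (n₁:ℝ) := by
            refine Finset.sum_le_sum fun i _ => ?_
            rw [abs_mul, abs_of_nonneg (by positivity : (0:ℝ) ≤ c / (n₁:ℝ))]
            exact mul_le_of_le_one_right (by positivity) (Real.abs_cos_le_one _)
        _ = c := by
            rw [Finset.sum_const, Finset.card_univ, Fintype.card_fin, nsmul_eq_mul]
            field_simp
    have h2 : |c * Real.exp (-(∑ i, (x i) ^ 2) / (2 * sf))| ≤ c := by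
      rw [abs_of_nonneg (by positivity)]
      apply mul_le_of_le_one_right hc0.le
      apply Real.exp_le_one_iff.mpr
      exact div_nonpos_of_nonpos_of_nonneg
        (neg_nonpos.mpr (Finset.sum_nonneg fun i _ => sq_nonneg _)) (by positivity)
    rw [hQ]
    simp only
    obtain ⟨ha1, ha2⟩ := abs_le.mp h1
    obtain ⟨hb1, hb2⟩ := abs_le.mp h2
    nlinarith
  have hQ_nonneg : ∀ W x, 0 ≤ Q W x := fun W x => by rw [hQ]; positivity
  -- measurability of Q on the product space
  have hq_meas : Measurable (fun z : (Fin n₁ → Fin n → ℝ) × (Fin n → ℝ) => Q z.1 z.2) := by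
    rw [hQ]
    apply Measurable.pow_const
    apply Measurable.sub
    · apply Finset.measurable_sum
      intro i _
      apply Measurable.const_mul
      apply Real.measurable_cos.comp
      apply Measurable.div_const
      apply Finset.measurable_sum
      intro j _
      exact ((measurable_pi_apply j).comp
        ((measurable_pi_apply i).comp measurable_fst)).mul
        ((measurable_pi_apply j).comp measurable_snd)
    · apply Measurable.const_mul
      apply Real.measurable_exp.comp
      apply Measurable.div_const
      exact (Finset.measurable_sum _ fun i _ =>
        ((measurable_pi_apply i).comp measurable_snd).pow_const 2).neg
  -- inner W-integral bound
  have hWle : ∀ x : Fin n → ℝ,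
      ∫ W : Fin n₁ → Fin n → ℝ, Q W x * ρW n n₁ W ≤ c ^ 2 / n₁ := by
    intro x
    have hterm_int : ∀ i j : Fin n₁,
        Integrable (fun W : Fin n₁ → Fin n → ℝ =>
          hfun (bx x) (W i) * hfun (bx x) (W j) * ρW n n₁ W) := by
      intro i j
      apply (integrable_ρW n n₁).bdd_mul (c := 4)
      · exact (((hfun_meas (bx x)).comp (measurable_pi_apply i)).mul
          ((hfun_meas (bx x)).comp (measurable_pi_apply j))).aestronglyMeasurable
      · refine Filter.Eventually.of_forall fun W => ?_
        rw [Real.norm_eq_abs, abs_mul]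
        have a1 := hfun_abs_le (bx x) (W i)
        have a2 := hfun_abs_le (bx x) (W j)
        have a3 := abs_nonneg (hfun (bx x) (W i))
        have a4 := abs_nonneg (hfun (bx x) (W j))
        nlinarith
    have e : ∀ W : Fin n₁ → Fin n → ℝ, Q W x * ρW n n₁ W
        = (c / (n₁:ℝ)) ^ 2 * ∑ i, ∑ j,
            hfun (bx x) (W i) * hfun (bx x) (W j) * ρW n n₁ W := by
      intro W
      rw [hq W x, mul_assoc]
      congr 1
      rw [sq (∑ i, hfun (bx x) (W i)), Finset.sum_mul_sum, Finset.sum_mul]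
      exact Finset.sum_congr rfl fun i _ => by rw [Finset.sum_mul]
    simp_rw [e]
    rw [integral_const_mul,
      integral_finset_sum _ (fun i _ => integrable_finset_sum _ (fun j _ => hterm_int i j))]
    have ediag : ∀ i : Fin n₁,
        (∫ W : Fin n₁ → Fin n → ℝ, ∑ j, hfun (bx x) (W i) * hfun (bx x) (W j) * ρW n n₁ W)
          = ∫ w, hfun (bx x) w ^ 2 * stdρ n w := by
      intro i
      rw [integral_finset_sum _ (fun j _ => hterm_int i j),
        Finset.sum_eq_single_of_mem i (Finset.mem_univ i)]
      · rw [← integral_diag (bx x) i]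
        congr 1
        ext W
        ring
      · intro j _ hji
        exact integral_offdiag (bx x) (Ne.symm hji)
    simp_rw [ediag]
    rw [Finset.sum_const, Finset.card_univ, Fintype.card_fin, nsmul_eq_mul]
    have hC1 := integral_hsq_stdρ_le (bx x)
    have hC0 : 0 ≤ ∫ w, hfun (bx x) w ^ 2 * stdρ n w :=
      integral_nonneg fun w => mul_nonneg (sq_nonneg _) (stdρ_nonneg w)
    calc (c / (n₁:ℝ)) ^ 2 * ((n₁:ℝ) * ∫ w, hfun (bx x) w ^ 2 * stdρ n w)
        ≤ (c / (n₁:ℝ)) ^ 2 * ((n₁:ℝ) * 1) := by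
          apply mul_le_mul_of_nonneg_left _ (sq_nonneg _)
          exact mul_le_mul_of_nonneg_left hC1 hn₁'.le
      _ = c ^ 2 / n₁ := by field_simp
  -- integrability on the product space
  have hΦ_int : Integrable
      (Function.uncurry fun (W : Fin n₁ → Fin n → ℝ) (x : Fin n → ℝ) =>
        Q W x * ρx x * ρW n n₁ W)
      ((volume : Measure (Fin n₁ → Fin n → ℝ)).prod (volume : Measure (Fin n → ℝ))) := by
    have hbound : Integrable (fun z : (Fin n₁ → Fin n → ℝ) × (Fin n → ℝ) =>
        (4 * c ^ 2) * (ρW n n₁ z.1 * ρx z.2)) (volume.prod volume) :=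
      ((integrable_ρW n n₁).mul_prod integrable_ρx).const_mul _
    apply Integrable.mono' hbound
    · exact ((hq_meas.mul (ρx_meas.comp measurable_snd)).mul
        ((ρW_meas n n₁).comp measurable_fst)).aestronglyMeasurable
    · apply Filter.Eventually.of_forall
      intro z
      rw [Function.uncurry, Real.norm_eq_abs, abs_of_nonneg (by
        exact mul_nonneg (mul_nonneg (hQ_nonneg _ _) (ρx_nonneg _)) (ρW_nonneg _))]
      calc Q z.1 z.2 * ρx z.2 * ρW n n₁ z.1
          ≤ (4 * c ^ 2) * ρx z.2 * ρW n n₁ z.1 := by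
            apply mul_le_mul_of_nonneg_right _ (ρW_nonneg _)
            exact mul_le_mul_of_nonneg_right (hq_bdd _ _) (ρx_nonneg _)
        _ = (4 * c ^ 2) * (ρW n n₁ z.1 * ρx z.2) := by ring
  -- Fubini
  have hswap : (∫ W : Fin n₁ → Fin n → ℝ, ∫ x : Fin n → ℝ, Q W x * ρx x * ρW n n₁ W)
      = ∫ x : Fin n → ℝ, ∫ W : Fin n₁ → Fin n → ℝ, Q W x * ρx x * ρW n n₁ W :=
    integral_integral_swap hΦ_int
  -- contradiction
  by_contra hcon
  push_neg at hcon
  have hcon' : ∀ W : Fin n₁ → Fin n → ℝ, ε < ∫ x, Q W x ∂(gaussMeasure n sx) := hcon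
  have hconv : ∀ W : Fin n₁ → Fin n → ℝ,
      (∫ x, Q W x ∂(gaussMeasure n sx)) = ∫ x, Q W x * ρx x := by
    intro W
    rw [integral_gaussMeasure hsx (Q W), hρx]
  have hcon'' : ∀ W : Fin n₁ → Fin n → ℝ, ε < ∫ x, Q W x * ρx x := by
    intro W; rw [← hconv W]; exact hcon' W
  -- lower bound on the double integral
  have hmargW : Integrable (fun W : Fin n₁ → Fin n → ℝ =>
      ∫ x, Q W x * ρx x * ρW n n₁ W) := hΦ_int.integral_prod_left
  have hmargWeq : (fun W : Fin n₁ → Fin n → ℝ => (∫ x, Q W x * ρx x) * ρW n n₁ W)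
      = fun W => ∫ x, Q W x * ρx x * ρW n n₁ W :=
    funext fun W => (integral_mul_const _ _).symm
  have hlow : ε ≤ ∫ W : Fin n₁ → Fin n → ℝ, ∫ x, Q W x * ρx x * ρW n n₁ W := by
    have : ε = ∫ W : Fin n₁ → Fin n → ℝ, ε * ρW n n₁ W := by
      rw [integral_const_mul, integral_ρW]; ring
    rw [this]
    rw [← hmargWeq]
    apply integral_mono ((integrable_ρW n n₁).const_mul ε) (hmargWeq ▸ hmargW)
    intro W
    exact mul_le_mul_of_nonneg_right (hcon'' W).le (ρW_nonneg W)
  -- upper bound on the double integral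
  have hup : (∫ x : Fin n → ℝ, ∫ W : Fin n₁ → Fin n → ℝ, Q W x * ρx x * ρW n n₁ W)
      ≤ c ^ 2 / n₁ := by
    have hin : ∀ x : Fin n → ℝ,
        (∫ W : Fin n₁ → Fin n → ℝ, Q W x * ρx x * ρW n n₁ W)
          ≤ (c ^ 2 / n₁) * ρx x := by
      intro x
      have e : ∀ W : Fin n₁ → Fin n → ℝ,
          Q W x * ρx x * ρW n n₁ W = ρx x * (Q W x * ρW n n₁ W) := fun W => by ring
      simp_rw [e]
      rw [integral_const_mul]
      rw [mul_comm (c ^ 2 / (n₁:ℝ)) (ρx x)]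
      exact mul_le_mul_of_nonneg_left (hWle x) (ρx_nonneg x)
    have hintx : Integrable (fun x : Fin n → ℝ =>
        ∫ W : Fin n₁ → Fin n → ℝ, Q W x * ρx x * ρW n n₁ W) :=
      hΦ_int.integral_prod_right
    calc (∫ x : Fin n → ℝ, ∫ W : Fin n₁ → Fin n → ℝ, Q W x * ρx x * ρW n n₁ W)
        ≤ ∫ x : Fin n → ℝ, (c ^ 2 / n₁) * ρx x :=
          integral_mono hintx (integrable_ρx.const_mul _) hin
      _ = c ^ 2 / n₁ := by rw [integral_const_mul, integral_ρx]; ring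
  -- numeric conclusion
  have hcsq : c ^ 2 = α ^ ((n : ℝ) / 2) := by
    rw [hc, ← Real.rpow_natCast (α ^ ((n : ℝ) / 4)) 2, ← Real.rpow_mul hα0.le]
    congr 1
    push_cast
    ring
  have hfin : c ^ 2 / n₁ < ε := by
    rw [div_lt_iff₀ hn₁', hcsq]
    have h1 : (1 / ε) * α ^ ((n : ℝ) / 2) < (n₁:ℝ) := hbig
    have h2 : α ^ ((n : ℝ) / 2) = ε * ((1 / ε) * α ^ ((n : ℝ) / 2)) := by
      field_simp
    rw [h2]
    calc ε * ((1 / ε) * α ^ ((n : ℝ) / 2)) < ε * (n₁:ℝ) :=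
          mul_lt_mul_of_pos_left h1 hε
      _ = ε * n₁ := rfl
  rw [hswap] at hlow
  linarith
end
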